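/- arXiv:2401.01800 — 4 statements merged into one kernel-verified Lean document; each statement's English description precedes it below -/
import Mathlib

section
/- Theorem (Bollobás–Thomason): For every ε ∈ (0,1/2) there exists a constant K = K(ε) > 0, depending only on ε, such that for every N ∈ ℕ, every nontrivial monotone property F ⊆ {0,1}^N, and all p, p' ∈ [0,1]: if μ_p(F) ≥ ε and p' ≥ min(1, K·p), then μ_{p'}(F) ≥ 1 − ε. -/
open Finset

/-- The number of coordinates of `x ∈ {0,1}^N` equal to `1`. -/
def wt {N : ℕ} (x : Fin N → Bool) : ℕ := (Finset.univ.filter (fun i => x i = true)).card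

open Classical in
/-- The probability of the property `F ⊆ {0,1}^N` under the product measure `μ_p`
in which each coordinate is `1` independently with probability `p`. -/
noncomputable def mu (N : ℕ) (p : ℝ) (F : Set (Fin N → Bool)) : ℝ :=
  ∑ x : Fin N → Bool,
    if x ∈ F then p ^ wt x * (1 - p) ^ (N - wt x) else 0

/-- A property `F ⊆ {0,1}^N` is monotone if it is closed upwards in the
coordinatewise order. -/
def MonotoneProp {N : ℕ} (F : Set (Fin N → Bool)) : Prop :=
  ∀ x y : Fin N → Bool, x ∈ F → x ≤ y → y ∈ F

/- ### Auxiliary machinery -/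

/-- Product weight of a point. -/
noncomputable def BT.w (p : ℝ) {N : ℕ} (x : Fin N → Bool) : ℝ :=
  ∏ i, (if x i = true then p else 1 - p)

open Classical in
noncomputable def BT.ind {N : ℕ} (F : Set (Fin N → Bool)) (x : Fin N → Bool) : ℝ :=
  if x ∈ F then 1 else 0

namespace BT

variable {N : ℕ} {p q : ℝ} {F : Set (Fin N → Bool)}

lemma w_nonneg (h0 : 0 ≤ p) (h1 : p ≤ 1) (x : Fin N → Bool) : 0 ≤ w p x :=
  Finset.prod_nonneg fun i _ => by split <;> linarith

lemma ind_nonneg (x : Fin N → Bool) : 0 ≤ ind F x := by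
  unfold ind; split <;> norm_num

lemma ind_le_one (x : Fin N → Bool) : ind F x ≤ 1 := by
  unfold ind; split <;> norm_num

lemma sum_w : ∑ x : Fin N → Bool, w p x = 1 := by
  classical
  unfold w
  calc ∑ x : Fin N → Bool, ∏ i, (if x i = true then p else 1 - p)
      = ∏ _i : Fin N, ∑ b : Bool, (if b = true then p else 1 - p) :=
        (Fintype.prod_sum (fun (_ : Fin N) (b : Bool) => if b = true then p else 1 - p)).symm
    _ = 1 := by simp

lemma mu_eq : mu N p F = ∑ x : Fin N → Bool, ind F x * w p x := by
  classical
  unfold mu ind w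
  refine Finset.sum_congr rfl fun x _ => ?_
  split
  · rw [one_mul]
    rw [← Finset.prod_filter_mul_prod_filter_not Finset.univ (fun i => x i = true)]
    have h1 : ∏ i ∈ Finset.univ.filter (fun i => x i = true),
        (if x i = true then p else 1 - p) = p ^ wt x := by
      rw [Finset.prod_congr rfl (fun i hi => ?_), Finset.prod_const]
      · rfl
      · simp only [Finset.mem_filter] at hi; simp [hi.2]
    have h2 : ∏ i ∈ Finset.univ.filter (fun i => ¬ x i = true),
        (if x i = true then p else 1 - p) = (1 - p) ^ (N - wt x) := by
      rw [Finset.prod_congr rfl (fun i hi => ?_), Finset.prod_const]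
      · congr 1
        have := Finset.card_filter_add_card_filter_not
          (s := (Finset.univ : Finset (Fin N))) (p := fun i => x i = true)
        simp only [Finset.card_univ, Fintype.card_fin] at this
        unfold wt; omega
      · simp only [Finset.mem_filter] at hi; simp [hi.2]
    rw [h1, h2]
  · rw [zero_mul]

lemma mu_nonneg (h0 : 0 ≤ p) (h1 : p ≤ 1) : 0 ≤ mu N p F := by
  rw [mu_eq]
  exact Finset.sum_nonneg fun x _ => mul_nonneg (ind_nonneg x) (w_nonneg h0 h1 x)

lemma mu_le_one (h0 : 0 ≤ p) (h1 : p ≤ 1) : mu N p F ≤ 1 := by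
  rw [mu_eq]
  calc ∑ x : Fin N → Bool, ind F x * w p x ≤ ∑ x : Fin N → Bool, w p x := by
        refine Finset.sum_le_sum fun x _ => ?_
        nlinarith [ind_nonneg (F := F) x, ind_le_one (F := F) x, w_nonneg h0 h1 x]
    _ = 1 := sum_w

/-- The key coupling identity: sampling at level `p + q - p*q` is the same as
taking the pointwise `or` of independent samples at levels `p` and `q`. -/
lemma coupling :
    mu N (p + q - p * q) F =
      ∑ x : Fin N → Bool, ∑ y : Fin N → Bool, ind F (x ⊔ y) * (w p x * w q y) := by
  classical
  -- per-coordinate term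
  set term : Bool × Bool → ℝ :=
    fun ab => (if ab.1 = true then p else 1 - p) * (if ab.2 = true then q else 1 - q) with hterm
  set Sb : Bool → Finset (Bool × Bool) :=
    fun b => Finset.univ.filter (fun ab => (ab.1 || ab.2) = b) with hSb
  have hcoord : ∀ b : Bool,
      (if b = true then p + q - p * q else 1 - (p + q - p * q)) = ∑ ab ∈ Sb b, term ab := by
    intro b
    cases b <;> simp [hSb, hterm, Finset.sum_filter, Fintype.sum_prod_type] <;> ring
  have step1 : mu N (p + q - p * q) F =
      ∑ z : Fin N → Bool, ind F z *
        ∑ g ∈ Fintype.piFinset (fun i => Sb (z i)), ∏ i, term (g i) := by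
    rw [mu_eq]
    refine Finset.sum_congr rfl fun z _ => ?_
    congr 1
    unfold w
    calc ∏ i, (if z i = true then p + q - p * q else 1 - (p + q - p * q)) =
          ∏ i, ∑ ab ∈ Sb (z i), term ab := by
            exact Finset.prod_congr rfl fun i _ => hcoord (z i)
      _ = _ := Finset.prod_univ_sum _ _
  -- rewrite piFinset as a filter over all functions
  have hfib : ∀ z : Fin N → Bool, Fintype.piFinset (fun i => Sb (z i)) =
      Finset.univ.filter (fun g : Fin N → Bool × Bool =>
        (fun i => ((g i).1 || (g i).2)) = z) := by
    intro z
    ext g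
    simp only [Fintype.mem_piFinset, hSb, Finset.mem_filter, Finset.mem_univ, true_and]
    constructor
    · intro h; funext i; exact h i
    · intro h i; exact congrFun h i
  have step2 : mu N (p + q - p * q) F =
      ∑ g : Fin N → Bool × Bool, ind F (fun i => ((g i).1 || (g i).2)) * ∏ i, term (g i) := by
    rw [step1]
    calc ∑ z : Fin N → Bool, ind F z *
          ∑ g ∈ Fintype.piFinset (fun i => Sb (z i)), ∏ i, term (g i)
        = ∑ z : Fin N → Bool, ∑ g ∈ Finset.univ.filter
            (fun g : Fin N → Bool × Bool => (fun i => ((g i).1 || (g i).2)) = z),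
            ind F (fun i => ((g i).1 || (g i).2)) * ∏ i, term (g i) := by
          refine Finset.sum_congr rfl fun z _ => ?_
          rw [hfib z, Finset.mul_sum]
          refine Finset.sum_congr rfl fun g hg => ?_
          simp only [Finset.mem_filter] at hg
          rw [hg.2]
      _ = _ := Finset.sum_fiberwise _ _ _
  rw [step2]
  -- split a function into Bool × Bool into its two components
  have hsplit := Equiv.sum_comp (Equiv.arrowProdEquivProdArrow (Fin N) (fun _ => Bool) (fun _ => Bool))
    (fun xy : (Fin N → Bool) × (Fin N → Bool) =>
      ind F (xy.1 ⊔ xy.2) * (w p xy.1 * w q xy.2))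
  rw [Fintype.sum_prod_type] at hsplit
  rw [← hsplit]
  refine Finset.sum_congr rfl fun g _ => ?_
  show (ind F fun i => (g i).1 || (g i).2) * ∏ i, term (g i) =
    ind F ((fun c => (g c).1) ⊔ fun c => (g c).2) *
      ((w p fun c => (g c).1) * w q fun c => (g c).2)
  have hsup : ((fun c => (g c).1) ⊔ fun c => (g c).2) = fun i => (g i).1 || (g i).2 := rfl
  rw [hsup]
  congr 1
  unfold w
  rw [← Finset.prod_mul_distrib]

lemma sum_sum_w : (∑ x : Fin N → Bool, ∑ y : Fin N → Bool, w p x * w q y) = 1 := by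
  calc (∑ x : Fin N → Bool, ∑ y : Fin N → Bool, w p x * w q y)
      = (∑ x : Fin N → Bool, w p x) * (∑ y : Fin N → Bool, w q y) :=
        (Finset.sum_mul_sum _ _ _ _).symm
    _ = 1 := by rw [sum_w, sum_w, one_mul]

lemma ind_mono (hF : MonotoneProp F) {x y : Fin N → Bool} (hxy : x ≤ y) :
    ind F x ≤ ind F y := by
  unfold ind
  by_cases hx : x ∈ F
  · rw [if_pos hx, if_pos (hF x y hx hxy)]
  · rw [if_neg hx]
    split <;> norm_num

lemma mu_mono_aux (hF : MonotoneProp F) (hp0 : 0 ≤ p) (hp1 : p ≤ 1)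
    (hq0 : 0 ≤ q) (hq1 : q ≤ 1) : mu N p F ≤ mu N (p + q - p * q) F := by
  rw [coupling, mu_eq]
  calc ∑ x : Fin N → Bool, ind F x * w p x
      = ∑ x : Fin N → Bool, ∑ y : Fin N → Bool, ind F x * (w p x * w q y) := by
        refine Finset.sum_congr rfl fun x _ => ?_
        simp only [← mul_assoc, ← Finset.mul_sum]
        rw [sum_w, mul_one]
    _ ≤ ∑ x : Fin N → Bool, ∑ y : Fin N → Bool, ind F (x ⊔ y) * (w p x * w q y) := by
        refine Finset.sum_le_sum fun x _ => Finset.sum_le_sum fun y _ => ?_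
        exact mul_le_mul_of_nonneg_right (ind_mono hF le_sup_left)
          (mul_nonneg (w_nonneg hp0 hp1 x) (w_nonneg hq0 hq1 y))

lemma mu_mono (hF : MonotoneProp F) {p' : ℝ} (hp : p ∈ Set.Icc (0:ℝ) 1)
    (hp' : p' ∈ Set.Icc (0:ℝ) 1) (hle : p ≤ p') : mu N p F ≤ mu N p' F := by
  obtain ⟨hp0, hp1⟩ := hp
  obtain ⟨hp'0, hp'1⟩ := hp'
  rcases eq_or_lt_of_le hp1 with h1 | h1
  · have : p' = p := le_antisymm (h1 ▸ hp'1) hle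
    rw [this]
  · set q := (p' - p) / (1 - p) with hq
    have hne : (1 : ℝ) - p ≠ 0 := by linarith
    have hq0 : 0 ≤ q := div_nonneg (by linarith) (by linarith)
    have hq1 : q ≤ 1 := (div_le_one (by linarith)).mpr (by linarith)
    have hpq : p + q - p * q = p' := by
      have h : q * (1 - p) = p' - p := by rw [hq]; exact div_mul_cancel₀ _ hne
      linear_combination h
    rw [← hpq]
    exact mu_mono_aux hF hp0 hp1 hq0 hq1

lemma one_sub_mu : 1 - mu N p F = ∑ x : Fin N → Bool, (1 - ind F x) * w p x := by
  rw [mu_eq]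
  simp only [sub_mul, one_mul, Finset.sum_sub_distrib]
  rw [sum_w]

lemma boost (hF : MonotoneProp F) (hp0 : 0 ≤ p) (hp1 : p ≤ 1)
    (hq0 : 0 ≤ q) (hq1 : q ≤ 1) :
    1 - mu N (p + q - p * q) F ≤ (1 - mu N p F) * (1 - mu N q F) := by
  have lhs : 1 - mu N (p + q - p * q) F =
      ∑ x : Fin N → Bool, ∑ y : Fin N → Bool, (1 - ind F (x ⊔ y)) * (w p x * w q y) := by
    rw [coupling]
    simp only [sub_mul, one_mul, Finset.sum_sub_distrib]
    rw [sum_sum_w]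
  rw [lhs, one_sub_mu, one_sub_mu, Finset.sum_mul_sum]
  refine Finset.sum_le_sum fun x _ => Finset.sum_le_sum fun y _ => ?_
  have hw : 0 ≤ w p x * w q y := mul_nonneg (w_nonneg hp0 hp1 x) (w_nonneg hq0 hq1 y)
  have key : 1 - ind F (x ⊔ y) ≤ (1 - ind F x) * (1 - ind F y) := by
    classical
    by_cases hxy : x ⊔ y ∈ F
    · have hxy1 : ind F (x ⊔ y) = 1 := by simp [ind, hxy]
      rw [hxy1, sub_self]
      have h1 := ind_le_one (F := F) x
      have h2 := ind_le_one (F := F) y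
      exact mul_nonneg (by linarith) (by linarith)
    · have hx : x ∉ F := fun hx => hxy (hF x (x ⊔ y) hx le_sup_left)
      have hy : y ∉ F := fun hy => hxy (hF y (x ⊔ y) hy le_sup_right)
      simp [ind, hxy, hx, hy]
  calc (1 - ind F (x ⊔ y)) * (w p x * w q y)
      ≤ ((1 - ind F x) * (1 - ind F y)) * (w p x * w q y) :=
        mul_le_mul_of_nonneg_right key hw
    _ = (1 - ind F x) * w p x * ((1 - ind F y) * w q y) := by ring

lemma iterate (hF : MonotoneProp F) (hp0 : 0 ≤ p) (hp1 : p ≤ 1) (m : ℕ) :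
    1 - mu N (1 - (1 - p) ^ m) F ≤ (1 - mu N p F) ^ m := by
  have hpow : ∀ k : ℕ, 0 ≤ (1 - p) ^ k ∧ (1 - p) ^ k ≤ 1 := fun k =>
    ⟨pow_nonneg (by linarith) k, pow_le_one₀ (by linarith) (by linarith)⟩
  induction m with
  | zero =>
    simp only [pow_zero, sub_self]
    have := mu_nonneg (N := N) (F := F) (p := 0) le_rfl zero_le_one
    linarith
  | succ k ih =>
    have hrk0 : 0 ≤ 1 - (1 - p) ^ k := by have := (hpow k).2; linarith
    have hrk1 : 1 - (1 - p) ^ k ≤ 1 := by have := (hpow k).1; linarith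
    have hstep : 1 - (1 - p) ^ (k + 1) =
        (1 - (1 - p) ^ k) + p - (1 - (1 - p) ^ k) * p := by ring
    rw [hstep, pow_succ]
    calc 1 - mu N ((1 - (1 - p) ^ k) + p - (1 - (1 - p) ^ k) * p) F
        ≤ (1 - mu N (1 - (1 - p) ^ k) F) * (1 - mu N p F) :=
          boost hF hrk0 hrk1 hp0 hp1
      _ ≤ (1 - mu N p F) ^ k * (1 - mu N p F) := by
          refine mul_le_mul_of_nonneg_right ih ?_
          have := mu_le_one (N := N) (F := F) hp0 hp1
          linarith

end BT

/-- Bollobás–Thomason: every nontrivial monotone property has a threshold function,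
and one can take the critical probability as the threshold function. -/
theorem bollobas_thomason :
    ∀ ε : ℝ, 0 < ε → ε < 1/2 →
    ∃ K : ℝ, 0 < K ∧
      ∀ (N : ℕ) (F : Set (Fin N → Bool)), F.Nonempty → F ≠ Set.univ →
        MonotoneProp F →
        ∀ p p' : ℝ, p ∈ Set.Icc (0:ℝ) 1 → p' ∈ Set.Icc (0:ℝ) 1 →
          ε ≤ mu N p F → min 1 (K * p) ≤ p' → 1 - ε ≤ mu N p' F := by
  intro ε hε hε2
  obtain ⟨n, hn⟩ := exists_pow_lt_of_lt_one hε (by linarith : (1:ℝ) - ε < 1)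
  set m := n + 1 with hm
  refine ⟨(m : ℝ), by positivity, ?_⟩
  intro N F _ _ hF p p' hp hp' hmu hmin
  obtain ⟨hp0, hp1⟩ := hp
  -- the intermediate probability
  set r : ℝ := 1 - (1 - p) ^ m with hr
  have hr0 : 0 ≤ r := by
    have : (1 - p) ^ m ≤ 1 := pow_le_one₀ (by linarith) (by linarith)
    simp only [hr]; linarith
  have hr1 : r ≤ 1 := by
    have : 0 ≤ (1 - p) ^ m := pow_nonneg (by linarith) m
    simp only [hr]; linarith
  -- Bernoulli: r ≤ m * p
  have hbern : r ≤ (m : ℝ) * p := by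
    have := one_add_mul_le_pow (a := -p) (by linarith) m
    simp only [hr]
    rw [show (1 : ℝ) + -p = 1 - p by ring] at this
    nlinarith
  have hrp' : r ≤ p' := le_trans (le_min hr1 hbern) hmin
  -- boosting estimate at r
  have hiter := BT.iterate (N := N) (F := F) (p := p) hF hp0 hp1 m
  have hmu1 : mu N p F ≤ 1 := BT.mu_le_one hp0 hp1
  have hbound : (1 - mu N p F) ^ m ≤ ε := by
    calc (1 - mu N p F) ^ m ≤ (1 - ε) ^ m :=
          pow_le_pow_left₀ (by linarith) (by linarith) m
      _ = (1 - ε) ^ n * (1 - ε) := by rw [hm, pow_succ]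
      _ ≤ (1 - ε) ^ n * 1 := by
          refine mul_le_mul_of_nonneg_left (by linarith) ?_
          exact pow_nonneg (by linarith) n
      _ ≤ ε := by rw [mul_one]; linarith
  have hmur : 1 - ε ≤ mu N r F := by
    have : 1 - mu N r F ≤ ε := le_trans hiter hbound
    linarith
  exact le_trans hmur (BT.mu_mono hF ⟨hr0, hr1⟩ hp' hrp')
end

section
/- Theorem (Park–Pham; the Kahn–Kalai Conjecture): There exists an absolute constant K > 0 such that the following holds for every N ∈ ℕ, every nontrivial monotone property F ⊆ {0,1}^N with L(F) ≥ 2, and every p ∈ (0,1): if F is not p-small, then μ_q(F) ≥ 1/2, where q = min(1, K·p·log L(F)). Equivalently, the critical probability p_c(F) (the unique p with μ_p(F) = 1/2) satisfies p_c(F) ≤ K·q(F)·log L(F), where q(F) is the largest p for which F is p-small. -/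
open Finset

/-- A property `F ⊆ {0,1}^N` is `p`-small if it admits a cover `G` with
`∑_{S ∈ G} p^{|S|} ≤ 1/2`. -/
def PSmall (N : ℕ) (p : ℝ) (F : Set (Fin N → Bool)) : Prop :=
  ∃ G : Finset (Fin N → Bool),
    (∀ T ∈ F, ∃ S ∈ G, S ≤ T) ∧ ∑ S ∈ G, p ^ wt S ≤ 1/2

open Classical in
/-- `L(F)`: the maximum number of `1`-coordinates of a minimal element of `F`. -/
noncomputable def Lmax (N : ℕ) (F : Set (Fin N → Bool)) : ℕ :=
  (Finset.univ.filter
    (fun x : Fin N → Bool => x ∈ F ∧ ∀ y : Fin N → Bool, y ∈ F → y ≤ x → y = x)).sup wt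


namespace PP

variable {n : ℕ}

/-- characteristic function of a finset -/
def chi (A : Finset (Fin n)) : Fin n → Bool := fun i => decide (i ∈ A)

def tf (x : Fin n → Bool) : Finset (Fin n) := Finset.univ.filter (fun i => x i = true)

lemma tf_chi (A : Finset (Fin n)) : tf (chi A) = A := by
  ext i; simp [tf, chi]

lemma chi_tf (x : Fin n → Bool) : chi (tf x) = x := by
  funext i; simp [tf, chi]

lemma wt_eq (x : Fin n → Bool) : wt x = (tf x).card := rfl

lemma wt_chi (A : Finset (Fin n)) : wt (chi A) = A.card := by rw [wt_eq, tf_chi]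

lemma chi_bijective : Function.Bijective (chi (n := n)) :=
  Function.bijective_iff_has_inverse.2 ⟨tf, tf_chi, chi_tf⟩

lemma chi_mono {A B : Finset (Fin n)} (h : A ⊆ B) : chi A ≤ chi B := by
  intro i
  simp only [chi]
  by_cases hi : i ∈ A
  · simp [hi, h hi]
  · simp [hi]

lemma le_iff_tf {x y : Fin n → Bool} : x ≤ y ↔ tf x ⊆ tf y := by
  constructor
  · intro h i hi
    simp only [tf, mem_filter, mem_univ, true_and] at hi ⊢
    have := h i
    rw [hi] at this
    exact Bool.eq_true_of_true_le this
  · intro h i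
    by_cases hx : x i = true
    · have : i ∈ tf x := by simp [tf, hx]
      have := h this
      simp only [tf, mem_filter, mem_univ, true_and] at this
      rw [hx, this]
    · simp at hx
      rw [hx]
      exact Bool.false_le _

/-- Bernoulli weight relative to ground set s -/
noncomputable def w (a : ℝ) (s A : Finset (Fin n)) : ℝ := a ^ A.card * (1 - a) ^ (s.card - A.card)

/-- single-sum operator -/
noncomputable def SOp (a : ℝ) (s : Finset (Fin n)) (f : Finset (Fin n) → ℝ) : ℝ :=
  ∑ A ∈ s.powerset, w a s A * f A

lemma w_insert_left {a : ℝ} {x : Fin n} {s A : Finset (Fin n)} (hx : x ∉ s) (hA : A ⊆ s) :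
    w a (insert x s) A = (1 - a) * w a s A := by
  unfold w
  rw [card_insert_of_notMem hx, Nat.succ_sub (card_le_card hA), pow_succ]
  ring

lemma w_insert_right {a : ℝ} {x : Fin n} {s A : Finset (Fin n)} (hx : x ∉ s) (hA : A ⊆ s) :
    w a (insert x s) (insert x A) = a * w a s A := by
  unfold w
  rw [card_insert_of_notMem hx, card_insert_of_notMem (fun h => hx (hA h)),
    Nat.succ_sub_succ]
  ring

lemma SOp_empty (a : ℝ) (f : Finset (Fin n) → ℝ) : SOp a ∅ f = f ∅ := by
  simp [SOp, w]

lemma SOp_insert {a : ℝ} {x : Fin n} {s : Finset (Fin n)} (hx : x ∉ s) (f : Finset (Fin n) → ℝ) :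
    SOp a (insert x s) f
      = (1 - a) * SOp a s f + a * SOp a s (fun A => f (insert x A)) := by
  unfold SOp
  rw [Finset.sum_powerset_insert hx, Finset.mul_sum, Finset.mul_sum]
  congr 1
  · exact Finset.sum_congr rfl fun A hA => by
      rw [w_insert_left hx (mem_powerset.1 hA)]; ring
  · exact Finset.sum_congr rfl fun A hA => by
      rw [w_insert_right hx (mem_powerset.1 hA)]; ring

lemma SOp_congr {a : ℝ} {s : Finset (Fin n)} {f g : Finset (Fin n) → ℝ}
    (h : ∀ A ∈ s.powerset, f A = g A) : SOp a s f = SOp a s g :=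
  Finset.sum_congr rfl fun A hA => by rw [h A hA]

lemma SOp_lin (a : ℝ) (s : Finset (Fin n)) (c c' : ℝ) (f g : Finset (Fin n) → ℝ) :
    SOp a s (fun A => c * f A + c' * g A) = c * SOp a s f + c' * SOp a s g := by
  unfold SOp
  rw [Finset.mul_sum, Finset.mul_sum, ← Finset.sum_add_distrib]
  exact Finset.sum_congr rfl fun A _ => by ring

lemma SOp_one (a : ℝ) (s : Finset (Fin n)) : SOp a s (fun _ => 1) = 1 := by
  induction s using Finset.induction_on with
  | empty => simp [SOp_empty]
  | insert _ _ hx ih => rw [SOp_insert hx]; rw [ih]; ring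

theorem conv (a b : ℝ) (s : Finset (Fin n)) :
    ∀ f : Finset (Fin n) → ℝ,
      SOp a s (fun A => SOp b s (fun B => f (A ∪ B))) = SOp (a + b - a * b) s f := by
  induction s using Finset.induction_on with
  | empty =>
      intro f; rw [SOp_empty, SOp_empty, SOp_empty]; simp
  | @insert x s' hx ih =>
      intro f
      rw [SOp_insert hx]
      have h1 : SOp a s' (fun A => SOp b (insert x s') (fun B => f (A ∪ B)))
          = SOp a s' (fun A => (1 - b) * SOp b s' (fun B => f (A ∪ B))
              + b * SOp b s' (fun B => f (insert x (A ∪ B)))) := by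
        refine SOp_congr fun A _ => ?_
        rw [SOp_insert hx]
        congr 1
        congr 1
        exact SOp_congr fun B _ => by rw [Finset.union_insert]
      have h2 : SOp a s' (fun A => SOp b (insert x s') (fun B => f (insert x A ∪ B)))
          = SOp a s' (fun A => (1 - b) * SOp b s' (fun B => f (insert x (A ∪ B)))
              + b * SOp b s' (fun B => f (insert x (A ∪ B)))) := by
        refine SOp_congr fun A _ => ?_
        rw [SOp_insert hx]
        congr 1
        · congr 1
          exact SOp_congr fun B _ => by rw [Finset.insert_union]
        · congr 1
          exact SOp_congr fun B _ => by
            rw [Finset.insert_union, Finset.union_insert, Finset.insert_idem]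
      rw [h1, h2, SOp_lin, SOp_lin, ih, ih (fun C => f (insert x C)),
        SOp_insert hx f]
      ring

/-- Bernoulli measure on finsets of Fin n with full ground set. -/
noncomputable def P (a : ℝ) (A : Finset (Fin n)) : ℝ := a ^ A.card * (1 - a) ^ (n - A.card)

lemma P_eq_w (a : ℝ) (A : Finset (Fin n)) : P a A = w a Finset.univ A := by
  simp [P, w]

lemma P_nonneg {a : ℝ} (h0 : 0 ≤ a) (h1 : a ≤ 1) (A : Finset (Fin n)) : 0 ≤ P a A :=
  mul_nonneg (pow_nonneg h0 _) (pow_nonneg (by linarith) _)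

lemma SOp_univ (a : ℝ) (f : Finset (Fin n) → ℝ) :
    SOp a Finset.univ f = ∑ A : Finset (Fin n), P a A * f A := by
  unfold SOp
  rw [Finset.powerset_univ]
  exact Finset.sum_congr rfl fun A _ => by rw [P_eq_w]

lemma sum_P (a : ℝ) : ∑ A : Finset (Fin n), P a A = 1 := by
  have := SOp_one a (Finset.univ : Finset (Fin n))
  rw [SOp_univ] at this
  simpa using this

theorem conv_P (a b : ℝ) (f : Finset (Fin n) → ℝ) :
    ∑ A : Finset (Fin n), ∑ B : Finset (Fin n), P a A * P b B * f (A ∪ B)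
      = ∑ C : Finset (Fin n), P (a + b - a * b) C * f C := by
  have := conv a b (Finset.univ : Finset (Fin n)) f
  rw [SOp_univ, SOp_univ] at this
  rw [← this]
  refine Finset.sum_congr rfl fun A _ => ?_
  rw [SOp_univ, Finset.mul_sum]
  exact Finset.sum_congr rfl fun B _ => by ring

lemma sup_cons {m : ℕ} (W : Finset (Fin n)) (ω' : Fin m → Finset (Fin n)) :
    Finset.univ.sup (Fin.cons W ω') = W ⊔ Finset.univ.sup ω' := by
  apply le_antisymm
  · refine Finset.sup_le fun i _ => ?_
    induction i using Fin.cases with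
    | zero => rw [Fin.cons_zero]; exact le_sup_left
    | succ j =>
        rw [Fin.cons_succ]
        exact le_trans (Finset.le_sup (Finset.mem_univ j)) le_sup_right
  · refine sup_le ?_ ?_
    · have h := Finset.le_sup (f := Fin.cons W ω') (Finset.mem_univ (0 : Fin (m+1)))
      rw [Fin.cons_zero] at h
      exact h
    · refine Finset.sup_le fun j _ => ?_
      have h := Finset.le_sup (f := Fin.cons W ω') (Finset.mem_univ j.succ)
      rw [Fin.cons_succ] at h
      exact h

theorem union_law (σ : ℝ) : ∀ (m : ℕ) (f : Finset (Fin n) → ℝ),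
    ∑ ω : Fin m → Finset (Fin n), (∏ i, P σ (ω i)) * f (Finset.univ.sup ω)
      = ∑ C : Finset (Fin n), P (1 - (1 - σ) ^ m) C * f C := by
  intro m
  induction m with
  | zero =>
      intro f
      rw [Fintype.sum_unique]
      have h0 : (1 : ℝ) - (1 - σ) ^ 0 = 0 := by simp
      rw [h0]
      rw [Finset.sum_eq_single (∅ : Finset (Fin n))]
      · simp [P]
      · intro C _ hC
        have : C.card ≠ 0 := fun h => hC (Finset.card_eq_zero.1 h)
        simp [P, zero_pow this]
      · intro h; exact absurd (Finset.mem_univ _) h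
  | succ m ih =>
      intro f
      have happ : ∀ (W : Finset (Fin n)) (ω' : Fin m → Finset (Fin n)),
          (Fin.consEquiv (fun _ : Fin (m+1) => Finset (Fin n))) (W, ω')
            = Fin.cons (α := fun _ => Finset (Fin n)) W ω' := fun _ _ => rfl
      set e := Fin.consEquiv (fun _ : Fin (m+1) => Finset (Fin n)) with hedef
      rw [← Equiv.sum_comp e (fun ω => (∏ i, P σ (ω i)) * f (Finset.univ.sup ω))]
      rw [Fintype.sum_prod_type]
      have hterm : ∀ (W : Finset (Fin n)) (ω' : Fin m → Finset (Fin n)),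
          (∏ i, P σ ((e (W, ω')) i)) * f (Finset.univ.sup (e (W, ω')))
            = P σ W * ((∏ i, P σ (ω' i)) * f (W ⊔ Finset.univ.sup ω')) := by
        intro W ω'
        have he : e (W, ω') = Fin.cons (α := fun _ => Finset (Fin n)) W ω' := by rw [hedef]; exact happ W ω'
        rw [he, sup_cons, Fin.prod_univ_succ]
        simp only [Fin.cons_zero, Fin.cons_succ]
        ring
      calc ∑ W, ∑ ω' : Fin m → Finset (Fin n),
              (∏ i, P σ ((e (W, ω')) i)) * f (Finset.univ.sup (e (W, ω')))
          = ∑ W, P σ W * ∑ ω' : Fin m → Finset (Fin n),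
              (∏ i, P σ (ω' i)) * f (W ⊔ Finset.univ.sup ω') := by
            refine Finset.sum_congr rfl fun W _ => ?_
            rw [Finset.mul_sum]
            exact Finset.sum_congr rfl fun ω' _ => hterm W ω'
        _ = ∑ W, P σ W * ∑ C : Finset (Fin n), P (1 - (1-σ)^m) C * f (W ⊔ C) := by
            refine Finset.sum_congr rfl fun W _ => ?_
            rw [ih (fun C => f (W ⊔ C))]
        _ = ∑ W : Finset (Fin n), ∑ C : Finset (Fin n),
              P σ W * P (1 - (1-σ)^m) C * f (W ∪ C) := by
            refine Finset.sum_congr rfl fun W _ => ?_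
            rw [Finset.mul_sum]
            refine Finset.sum_congr rfl fun C _ => ?_
            rw [Finset.sup_eq_union]
            ring
        _ = ∑ C : Finset (Fin n), P (σ + (1 - (1-σ)^m) - σ * (1 - (1-σ)^m)) C * f C :=
            conv_P σ (1 - (1-σ)^m) f
        _ = ∑ C : Finset (Fin n), P (1 - (1 - σ) ^ (m+1)) C * f C := by
            have : σ + (1 - (1-σ)^m) - σ * (1 - (1-σ)^m) = 1 - (1 - σ) ^ (m+1) := by
              rw [pow_succ]; ring
            rw [this]

lemma mass_m (σ : ℝ) (m : ℕ) :
    ∑ ω : Fin m → Finset (Fin n), (∏ i, P σ (ω i)) = 1 := by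
  have := union_law (n := n) σ m (fun _ => (1:ℝ))
  simp only [mul_one] at this
  rw [this, sum_P]

open Classical in
noncomputable def ind (F : Set (Fin n → Bool)) (C : Finset (Fin n)) : ℝ :=
  if chi C ∈ F then 1 else 0

noncomputable def muF (q : ℝ) (F : Set (Fin n → Bool)) : ℝ :=
  ∑ C : Finset (Fin n), P q C * ind F C

lemma ind_nonneg (F : Set (Fin n → Bool)) (C : Finset (Fin n)) : 0 ≤ ind F C := by
  unfold ind; split <;> norm_num

lemma ind_le_one (F : Set (Fin n → Bool)) (C : Finset (Fin n)) : ind F C ≤ 1 := by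
  unfold ind; split <;> norm_num

end PP

open PP in
lemma mu_eq_muF (n : ℕ) (q : ℝ) (F : Set (Fin n → Bool)) : mu n q F = muF q F := by
  classical
  unfold mu muF
  rw [← Equiv.sum_comp (Equiv.ofBijective chi chi_bijective)
    (fun x => if x ∈ F then q ^ wt x * (1 - q) ^ (n - wt x) else 0)]
  refine Finset.sum_congr rfl fun A _ => ?_
  by_cases h : chi A ∈ F <;>
    simp [ind, h, wt_chi, P, Equiv.ofBijective, mul_comm]

namespace PP

lemma muF_mono {F : Set (Fin n → Bool)} (hM : MonotoneProp F) {q₀ q : ℝ}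
    (h0 : 0 ≤ q₀) (hq : q₀ ≤ q) (h1 : q ≤ 1) : muF q₀ F ≤ muF q F := by
  rcases eq_or_lt_of_le (le_trans hq h1 : q₀ ≤ 1) with h | h
  · have : q = 1 := le_antisymm h1 (h ▸ hq)
    rw [this, ← h]
  · set θ := (q - q₀) / (1 - q₀) with hθdef
    have h1q : (0:ℝ) < 1 - q₀ := by linarith
    have hθ0 : 0 ≤ θ := div_nonneg (by linarith) (le_of_lt h1q)
    have hθ1 : θ ≤ 1 := by
      rw [div_le_one h1q]; linarith
    have hc : q₀ + θ - q₀ * θ = q := by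
      have hθm : θ * (1 - q₀) = q - q₀ := by rw [hθdef]; exact div_mul_cancel₀ _ (ne_of_gt h1q)
      linear_combination hθm
    have hconv := conv_P q₀ θ (ind F)
    rw [hc] at hconv
    unfold muF
    rw [← hconv]
    have step1 : ∑ A : Finset (Fin n), P q₀ A * ind F A
        = ∑ A : Finset (Fin n), ∑ B : Finset (Fin n), P q₀ A * P θ B * ind F A := by
      refine Finset.sum_congr rfl fun A _ => ?_
      rw [← Finset.sum_mul, ← Finset.mul_sum]
      rw [sum_P]
      ring
    rw [step1]
    refine Finset.sum_le_sum fun A _ => Finset.sum_le_sum fun B _ => ?_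
    have hmono : ind F A ≤ ind F (A ∪ B) := by
      unfold ind
      by_cases h : chi A ∈ F
      · have : chi (A ∪ B) ∈ F := hM _ _ h (chi_mono Finset.subset_union_left)
        simp [h, this]
      · simp [h]
        split <;> norm_num
    have hnn : 0 ≤ P q₀ A * P θ B :=
      mul_nonneg (P_nonneg h0 (by linarith) A) (P_nonneg hθ0 hθ1 B)
    exact mul_le_mul_of_nonneg_left hmono hnn

end PP

namespace PP

variable {n : ℕ}

open Classical in
noncomputable def mf (H : Finset (Finset (Fin n))) (W T : Finset (Fin n)) : Finset (Fin n) :=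
  if h : (H.filter (fun T' => T' ⊆ T ∪ W)).Nonempty then
    (Finset.exists_min_image (H.filter (fun T' => T' ⊆ T ∪ W))
      (fun T' => (T' \ W).card) h).choose
  else ∅

lemma mf_spec {H : Finset (Finset (Fin n))} {W T : Finset (Fin n)} (hT : T ∈ H) :
    mf H W T ∈ H ∧ mf H W T ⊆ T ∪ W ∧
      ∀ T' ∈ H, T' ⊆ T ∪ W → (mf H W T \ W).card ≤ (T' \ W).card := by
  classical
  have hne : (H.filter (fun T' => T' ⊆ T ∪ W)).Nonempty :=
    ⟨T, Finset.mem_filter.2 ⟨hT, Finset.subset_union_left⟩⟩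
  rw [mf, dif_pos hne]
  obtain ⟨hmem, hmin⟩ := (Finset.exists_min_image (H.filter (fun T' => T' ⊆ T ∪ W))
      (fun T' => (T' \ W).card) hne).choose_spec
  rw [Finset.mem_filter] at hmem
  exact ⟨hmem.1, hmem.2, fun T' h1 h2 => hmin T' (Finset.mem_filter.2 ⟨h1, h2⟩)⟩

noncomputable def frag (H : Finset (Finset (Fin n))) (W T : Finset (Fin n)) : Finset (Fin n) :=
  mf H W T \ W

lemma frag_subset {H : Finset (Finset (Fin n))} {W T : Finset (Fin n)} (hT : T ∈ H) :
    frag H W T ⊆ T := by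
  intro i hi
  unfold frag at hi
  rw [Finset.mem_sdiff] at hi
  rcases Finset.mem_union.1 ((mf_spec hT).2.1 hi.1) with h | h
  · exact h
  · exact absurd h hi.2

open Classical in
noncomputable def newH (H : Finset (Finset (Fin n))) (W : Finset (Fin n)) (k : ℕ) :
    Finset (Finset (Fin n)) :=
  (H.filter (fun T => 2 * (frag H W T).card ≤ k)).image (frag H W)

open Classical in
noncomputable def badS (H : Finset (Finset (Fin n))) (W : Finset (Fin n)) (k : ℕ) :
    Finset (Finset (Fin n)) :=
  (H.filter (fun T => ¬ 2 * (frag H W T).card ≤ k)).image (frag H W)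

noncomputable def wp (p : ℝ) (G : Finset (Finset (Fin n))) : ℝ := ∑ U ∈ G, p ^ U.card

lemma wp_nonneg {p : ℝ} (hp : 0 ≤ p) (G : Finset (Finset (Fin n))) : 0 ≤ wp p G :=
  Finset.sum_nonneg fun _ _ => pow_nonneg hp _

lemma wp_union_le {p : ℝ} (hp : 0 ≤ p) (G₁ G₂ : Finset (Finset (Fin n))) :
    wp p (G₁ ∪ G₂) ≤ wp p G₁ + wp p G₂ := by
  classical
  have h1 : G₁ ∪ G₂ = G₁ ∪ (G₂ \ G₁) := by
    rw [Finset.union_sdiff_self_eq_union]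
  rw [wp, h1, Finset.sum_union Finset.disjoint_sdiff]
  have h2 : ∑ U ∈ G₂ \ G₁, p ^ U.card ≤ ∑ U ∈ G₂, p ^ U.card :=
    Finset.sum_le_sum_of_subset_of_nonneg (Finset.sdiff_subset)
      (fun U _ _ => pow_nonneg hp _)
  exact add_le_add le_rfl h2 |>.trans_eq rfl

lemma union_sdiff_of_disjoint {U W : Finset (Fin n)} (h : Disjoint U W) : (W ∪ U) \ U = W := by
  ext i
  simp only [Finset.mem_sdiff, Finset.mem_union]
  constructor
  · rintro ⟨h1 | h1, h2⟩
    · exact h1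
    · exact absurd h1 h2
  · intro hi
    exact ⟨Or.inl hi, fun hU => (Finset.disjoint_left.1 h) hU hi⟩

lemma badS_mem {H : Finset (Finset (Fin n))} {W : Finset (Fin n)} {k : ℕ}
    {U : Finset (Fin n)} (hU : U ∈ badS H W k) :
    Disjoint U W ∧ k < 2 * U.card ∧ (∃ T' ∈ H, T' ⊆ W ∪ U) ∧
      (∀ T' ∈ H, T' ⊆ W ∪ U → U ⊆ T') := by
  classical
  obtain ⟨T, hTf, hUT⟩ := Finset.mem_image.1 hU
  rw [Finset.mem_filter] at hTf
  obtain ⟨hT, hbadT⟩ := hTf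
  obtain ⟨hmfH, hmfsub, hmin⟩ := mf_spec (W := W) hT
  subst hUT
  have hdisj : Disjoint (frag H W T) W := by rw [frag]; exact Finset.sdiff_disjoint
  have hUsubT : frag H W T ⊆ T := frag_subset hT
  have hwit : mf H W T ⊆ W ∪ frag H W T := by
    intro i hi
    by_cases hiW : i ∈ W
    · exact Finset.mem_union.2 (Or.inl hiW)
    · exact Finset.mem_union.2 (Or.inr (by rw [frag, Finset.mem_sdiff]; exact ⟨hi, hiW⟩))
  refine ⟨hdisj, Nat.lt_of_not_le hbadT, ⟨mf H W T, hmfH, hwit⟩, ?_⟩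
  intro T' hT' hsub
  have hsub2 : T' ⊆ T ∪ W := by
    intro i hi
    rcases Finset.mem_union.1 (hsub hi) with h | h
    · exact Finset.mem_union.2 (Or.inr h)
    · exact Finset.mem_union.2 (Or.inl (hUsubT h))
  have hcard := hmin T' hT' hsub2
  have hsub3 : T' \ W ⊆ frag H W T := by
    intro i hi
    rw [Finset.mem_sdiff] at hi
    rcases Finset.mem_union.1 (hsub hi.1) with h | h
    · exact absurd h hi.2
    · exact h
  have heq : T' \ W = frag H W T :=
    Finset.eq_of_subset_of_card_le hsub3 (by unfold frag; exact hcard)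
  intro i hi
  have hi' : i ∈ T' \ W := by rw [heq]; exact hi
  exact (Finset.mem_sdiff.1 hi').1

theorem step_count {σ p : ℝ} (hσ0 : 0 < σ) (hσ1 : σ < 1) (hp : 0 ≤ p) (hpσ : 1024 * p ≤ σ)
    (H : Finset (Finset (Fin n))) (k : ℕ) (hH : ∀ T ∈ H, T.card ≤ k) :
    ∑ W : Finset (Fin n), P σ W * wp p (badS H W k) ≤ (1/16 : ℝ) ^ k := by
  classical
  set Adm : Finset (Fin n) → Finset (Fin n) → Prop := fun U V =>
    (∃ T' ∈ H, T' ⊆ V) ∧ (∀ T' ∈ H, T' ⊆ V → U ⊆ T') ∧ U ⊆ V ∧ k < 2 * U.card with hAdm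
  have hσ0' : (0:ℝ) ≤ σ := le_of_lt hσ0
  have hσ1' : σ ≤ 1 := le_of_lt hσ1
  have hbase : 0 ≤ (1 - σ) * p / σ ∧ (1 - σ) * p / σ ≤ 1/1024 := by
    constructor
    · apply div_nonneg (mul_nonneg (by linarith) hp) hσ0'
    · rw [div_le_div_iff₀ hσ0 (by norm_num : (0:ℝ) < 1024)]
      nlinarith [mul_nonneg (mul_nonneg (le_of_lt hσ0) hp) hσ0']
  -- Step 1: rewrite as double sum over (U, W)
  have hswap : ∑ W : Finset (Fin n), P σ W * wp p (badS H W k)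
      = ∑ U : Finset (Fin n), ∑ W : Finset (Fin n),
          (if U ∈ badS H W k then P σ W * p ^ U.card else 0) := by
    rw [Finset.sum_comm]
    refine Finset.sum_congr rfl fun W _ => ?_
    rw [wp, Finset.mul_sum]
    rw [Finset.sum_ite_mem, Finset.univ_inter]
  rw [hswap]
  -- Step 2: per-U shift bound
  have hUbound : ∀ U : Finset (Fin n),
      (∑ W : Finset (Fin n), (if U ∈ badS H W k then P σ W * p ^ U.card else 0))
      ≤ ∑ V : Finset (Fin n),
          (if Adm U V then ((1 - σ) * p / σ) ^ U.card * P σ V else 0) := by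
    intro U
    set EU := Finset.univ.filter (fun W => U ∈ badS H W k) with hEU
    have hL : (∑ W : Finset (Fin n), (if U ∈ badS H W k then P σ W * p ^ U.card else 0))
        = ∑ W ∈ EU, P σ W * p ^ U.card := by
      rw [hEU, Finset.sum_filter]
    rw [hL]
    have hshift : ∀ W ∈ EU, P σ W * p ^ U.card
        = ((1 - σ) * p / σ) ^ U.card * P σ (W ∪ U) := by
      intro W hW
      rw [hEU, Finset.mem_filter] at hW
      obtain ⟨hdisj, -, -, -⟩ := badS_mem hW.2
      have hcard : (W ∪ U).card = W.card + U.card := by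
        rw [Finset.union_comm, Finset.card_union_of_disjoint hdisj]
        exact Nat.add_comm _ _
      have hle : W.card + U.card ≤ n := by
        have := Finset.card_le_univ (W ∪ U)
        rw [hcard] at this
        simpa using this
      have e1 : n - W.card = (n - (W.card + U.card)) + U.card := by omega
      rw [P, P, hcard, e1, pow_add, pow_add, div_pow, mul_pow]
      have hσne : σ ≠ 0 := ne_of_gt hσ0
      field_simp
    rw [Finset.sum_congr rfl hshift]
    have hinj : ∀ W₁ ∈ EU, ∀ W₂ ∈ EU, W₁ ∪ U = W₂ ∪ U → W₁ = W₂ := by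
      intro W₁ h₁ W₂ h₂ he
      rw [hEU, Finset.mem_filter] at h₁ h₂
      have d₁ := (badS_mem h₁.2).1
      have d₂ := (badS_mem h₂.2).1
      rw [← union_sdiff_of_disjoint d₁, he, union_sdiff_of_disjoint d₂]
    have himg : ∑ W ∈ EU, ((1 - σ) * p / σ) ^ U.card * P σ (W ∪ U)
        = ∑ V ∈ EU.image (· ∪ U), ((1 - σ) * p / σ) ^ U.card * P σ V := by
      rw [Finset.sum_image hinj]
    rw [himg]
    have hsub : EU.image (· ∪ U) ⊆ Finset.univ.filter (fun V => Adm U V) := by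
      intro V hV
      obtain ⟨W, hW, hVW⟩ := Finset.mem_image.1 hV
      rw [hEU, Finset.mem_filter] at hW
      obtain ⟨hdisj, hk, hwit, hkey⟩ := badS_mem hW.2
      rw [Finset.mem_filter]
      refine ⟨Finset.mem_univ _, ?_⟩
      rw [hAdm]
      subst hVW
      exact ⟨hwit, hkey, Finset.subset_union_right, hk⟩
    calc ∑ V ∈ EU.image (· ∪ U), ((1 - σ) * p / σ) ^ U.card * P σ V
        ≤ ∑ V ∈ Finset.univ.filter (fun V => Adm U V),
            ((1 - σ) * p / σ) ^ U.card * P σ V := by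
          refine Finset.sum_le_sum_of_subset_of_nonneg hsub fun V _ _ => ?_
          exact mul_nonneg (pow_nonneg hbase.1 _) (P_nonneg hσ0' hσ1' V)
      _ = ∑ V : Finset (Fin n), (if Adm U V then ((1 - σ) * p / σ) ^ U.card * P σ V else 0) := by
          rw [Finset.sum_filter]
  calc ∑ U : Finset (Fin n), ∑ W : Finset (Fin n),
          (if U ∈ badS H W k then P σ W * p ^ U.card else 0)
      ≤ ∑ U : Finset (Fin n), ∑ V : Finset (Fin n),
          (if Adm U V then ((1 - σ) * p / σ) ^ U.card * P σ V else 0) :=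
        Finset.sum_le_sum fun U _ => hUbound U
    _ = ∑ V : Finset (Fin n), ∑ U : Finset (Fin n),
          (if Adm U V then ((1 - σ) * p / σ) ^ U.card * P σ V else 0) := Finset.sum_comm
    _ ≤ ∑ V : Finset (Fin n), (1/16 : ℝ) ^ k * P σ V := by
        refine Finset.sum_le_sum fun V _ => ?_
        have hPV : (0:ℝ) ≤ P σ V := P_nonneg hσ0' hσ1' V
        by_cases hV : ∃ T' ∈ H, T' ⊆ V
        · obtain ⟨T₀, hT₀, hT₀V⟩ := hV
          have hsub : Finset.univ.filter (fun U => Adm U V)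
              ⊆ T₀.powerset.filter (fun U => k < 2 * U.card) := by
            intro U hU
            rw [Finset.mem_filter, hAdm] at hU
            obtain ⟨-, -, hkey, -, hkU⟩ := hU
            rw [Finset.mem_filter, Finset.mem_powerset]
            exact ⟨hkey T₀ hT₀ hT₀V, hkU⟩
          calc ∑ U : Finset (Fin n),
                (if Adm U V then ((1 - σ) * p / σ) ^ U.card * P σ V else 0)
              = ∑ U ∈ Finset.univ.filter (fun U => Adm U V),
                  ((1 - σ) * p / σ) ^ U.card * P σ V := (Finset.sum_filter _ _).symm
            _ ≤ ∑ U ∈ T₀.powerset.filter (fun U => k < 2 * U.card),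
                  ((1 - σ) * p / σ) ^ U.card * P σ V := by
                refine Finset.sum_le_sum_of_subset_of_nonneg hsub fun U _ _ => ?_
                exact mul_nonneg (pow_nonneg hbase.1 _) hPV
            _ ≤ ∑ U ∈ T₀.powerset.filter (fun U => k < 2 * U.card),
                  (1/32 : ℝ) ^ (k+1) * P σ V := by
                refine Finset.sum_le_sum fun U hU => ?_
                rw [Finset.mem_filter] at hU
                have h2u : k + 1 ≤ 2 * U.card := hU.2
                have hc1 : ((1 - σ) * p / σ) ^ U.card ≤ (1/1024 : ℝ) ^ U.card :=
                  pow_le_pow_left₀ hbase.1 hbase.2 _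
                have hc2 : (1/1024 : ℝ) ^ U.card = (1/32 : ℝ) ^ (2 * U.card) := by
                  rw [pow_mul]; norm_num
                have hc3 : (1/32 : ℝ) ^ (2 * U.card) ≤ (1/32 : ℝ) ^ (k+1) :=
                  pow_le_pow_of_le_one (by norm_num) (by norm_num) h2u
                have : ((1 - σ) * p / σ) ^ U.card ≤ (1/32 : ℝ) ^ (k+1) :=
                  hc1.trans (hc2 ▸ hc3)
                exact mul_le_mul_of_nonneg_right this hPV
            _ = ((T₀.powerset.filter (fun U => k < 2 * U.card)).card : ℝ)
                  * ((1/32 : ℝ) ^ (k+1) * P σ V) := by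
                rw [Finset.sum_const, nsmul_eq_mul]
            _ ≤ (2 ^ k : ℝ) * ((1/32 : ℝ) ^ (k+1) * P σ V) := by
                have hcard : (T₀.powerset.filter (fun U => k < 2 * U.card)).card ≤ 2 ^ k := by
                  calc (T₀.powerset.filter (fun U => k < 2 * U.card)).card
                      ≤ T₀.powerset.card := Finset.card_filter_le _ _
                    _ = 2 ^ T₀.card := Finset.card_powerset _
                    _ ≤ 2 ^ k := Nat.pow_le_pow_right (by norm_num) (hH T₀ hT₀)
                have hcard' : ((T₀.powerset.filter (fun U => k < 2 * U.card)).card : ℝ)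
                    ≤ (2 ^ k : ℝ) := by
                  exact_mod_cast hcard
                exact mul_le_mul_of_nonneg_right hcard'
                  (mul_nonneg (pow_nonneg (by norm_num) _) hPV)
            _ ≤ (1/16 : ℝ) ^ k * P σ V := by
                have hnum : (2 ^ k : ℝ) * (1/32 : ℝ) ^ (k+1) ≤ (1/16 : ℝ) ^ k := by
                  rw [pow_succ, ← mul_assoc, ← mul_pow]
                  norm_num
                calc (2 ^ k : ℝ) * ((1/32 : ℝ) ^ (k+1) * P σ V)
                    = ((2 ^ k : ℝ) * (1/32 : ℝ) ^ (k+1)) * P σ V := by ring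
                  _ ≤ (1/16 : ℝ) ^ k * P σ V := mul_le_mul_of_nonneg_right hnum hPV
        · have hzero : ∀ U : Finset (Fin n),
              (if Adm U V then ((1 - σ) * p / σ) ^ U.card * P σ V else 0) = 0 := by
            intro U
            rw [if_neg]
            rw [hAdm]
            exact fun h => hV h.1
          rw [Finset.sum_congr rfl (fun U _ => hzero U), Finset.sum_const_zero]
          exact mul_nonneg (pow_nonneg (by norm_num) _) hPV
    _ = (1/16 : ℝ) ^ k := by
        rw [← Finset.mul_sum, sum_P, mul_one]


noncomputable def errB : ℕ → ℕ → ℝ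
  | 0, _ => 0
  | (m+1), k => (1/16 : ℝ) ^ k + errB m (k / 2)

lemma errB_zero (k : ℕ) : errB 0 k = 0 := rfl

lemma errB_succ (m k : ℕ) : errB (m+1) k = (1/16 : ℝ) ^ k + errB m (k / 2) := rfl

lemma sum_cons_split {σ : ℝ} {m : ℕ}
    (g : Finset (Fin n) → (Fin m → Finset (Fin n)) → ℝ) :
    ∑ ω : Fin (m+1) → Finset (Fin n), (∏ i, P σ (ω i)) * g (ω 0) (Fin.tail ω)
      = ∑ W : Finset (Fin n), P σ W *
          ∑ ω' : Fin m → Finset (Fin n), (∏ i, P σ (ω' i)) * g W ω' := by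
  classical
  have happ : ∀ (W : Finset (Fin n)) (ω' : Fin m → Finset (Fin n)),
      (Fin.consEquiv (fun _ : Fin (m+1) => Finset (Fin n))) (W, ω')
        = Fin.cons (α := fun _ => Finset (Fin n)) W ω' := fun _ _ => rfl
  set e := Fin.consEquiv (fun _ : Fin (m+1) => Finset (Fin n)) with hedef
  rw [← Equiv.sum_comp e (fun ω : Fin (m+1) → Finset (Fin n) =>
    (∏ i, P σ (ω i)) * g (ω 0) (Fin.tail ω))]
  rw [Fintype.sum_prod_type]
  refine Finset.sum_congr rfl fun W _ => ?_
  rw [Finset.mul_sum]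
  refine Finset.sum_congr rfl fun ω' _ => ?_
  have he : e (W, ω') = Fin.cons (α := fun _ => Finset (Fin n)) W ω' := by
    rw [hedef]; exact happ W ω'
  rw [he]
  rw [Fin.prod_univ_succ]
  simp only [Fin.cons_zero, Fin.cons_succ, Fin.tail_cons]
  ring

theorem iter {σ p : ℝ} (hσ0 : 0 < σ) (hσ1 : σ < 1) (hp : 0 ≤ p) (hpσ : 1024 * p ≤ σ) :
    ∀ (m : ℕ) (k : ℕ) (H : Finset (Finset (Fin n))), k < 2 ^ m → (∀ T ∈ H, T.card ≤ k) →
    ∃ Bad : (Fin m → Finset (Fin n)) → Finset (Finset (Fin n)),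
      (∀ ω, ∀ T ∈ H, (∃ U ∈ Bad ω, U ⊆ T) ∨ (∃ T' ∈ H, T' ⊆ Finset.univ.sup ω)) ∧
      (∑ ω : Fin m → Finset (Fin n), (∏ i, P σ (ω i)) * wp p (Bad ω)) ≤ errB m k := by
  classical
  have hσ0' : (0:ℝ) ≤ σ := le_of_lt hσ0
  have hσ1' : σ ≤ 1 := le_of_lt hσ1
  intro m
  induction m with
  | zero =>
      intro k H hk hH
      refine ⟨fun _ => ∅, ?_, ?_⟩
      · intro ω T hT
        right
        refine ⟨T, hT, ?_⟩
        have hT0 : T.card = 0 := by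
          have := hH T hT
          omega
        rw [Finset.card_eq_zero.1 hT0]
        exact Finset.empty_subset _
      · have : ∀ ω : Fin 0 → Finset (Fin n),
            (∏ i, P σ (ω i)) * wp p (∅ : Finset (Finset (Fin n))) = 0 := by
          intro ω
          simp [wp]
        rw [Finset.sum_congr rfl (fun ω _ => this ω), Finset.sum_const_zero, errB_zero]
  | succ m ih =>
      intro k H hk hH
      have hk2 : k / 2 < 2 ^ m := by
        have h2 : (2:ℕ) ^ (m+1) = 2 ^ m * 2 := pow_succ 2 m
        omega
      have hnewcard : ∀ W : Finset (Fin n), ∀ T' ∈ newH H W k, T'.card ≤ k / 2 := by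
        intro W T' hT'
        obtain ⟨T, hTf, hfr⟩ := Finset.mem_image.1 hT'
        rw [Finset.mem_filter] at hTf
        have h2 := hTf.2
        rw [← hfr]
        omega
      choose BadT hBadT using fun W : Finset (Fin n) =>
        ih (k / 2) (newH H W k) hk2 (hnewcard W)
      refine ⟨fun ω => badS H (ω 0) k ∪ BadT (ω 0) (Fin.tail ω), ?_, ?_⟩
      · intro ω T hT
        have hsup : Finset.univ.sup ω = ω 0 ⊔ Finset.univ.sup (Fin.tail ω) := by
          have h := sup_cons (ω 0) (Fin.tail ω)
          rw [Fin.cons_self_tail] at h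
          exact h
        by_cases hg : 2 * (frag H (ω 0) T).card ≤ k
        · have hmem : frag H (ω 0) T ∈ newH H (ω 0) k :=
            Finset.mem_image_of_mem _ (Finset.mem_filter.2 ⟨hT, hg⟩)
          rcases (hBadT (ω 0)).1 (Fin.tail ω) (frag H (ω 0) T) hmem with
            ⟨U, hU, hUsub⟩ | ⟨T'', hT'', hsub⟩
          · left
            exact ⟨U, Finset.mem_union.2 (Or.inr hU), hUsub.trans (frag_subset hT)⟩
          · right
            obtain ⟨T₂, hT₂f, hfr⟩ := Finset.mem_image.1 hT''
            rw [Finset.mem_filter] at hT₂f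
            obtain ⟨hmfH, hmfsub, -⟩ := mf_spec (W := ω 0) hT₂f.1
            refine ⟨mf H (ω 0) T₂, hmfH, ?_⟩
            intro i hi
            rw [hsup, Finset.sup_eq_union, Finset.mem_union]
            by_cases hiW : i ∈ ω 0
            · exact Or.inl hiW
            · have hif : i ∈ frag H (ω 0) T₂ := by
                unfold frag
                rw [Finset.mem_sdiff]
                exact ⟨hi, hiW⟩
              rw [hfr] at hif
              exact Or.inr (hsub hif)
        · left
          refine ⟨frag H (ω 0) T, Finset.mem_union.2 (Or.inl ?_), frag_subset hT⟩
          exact Finset.mem_image_of_mem _ (Finset.mem_filter.2 ⟨hT, hg⟩)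
      · have hprodnn : ∀ ω : Fin (m+1) → Finset (Fin n), 0 ≤ ∏ i, P σ (ω i) :=
          fun ω => Finset.prod_nonneg fun i _ => P_nonneg hσ0' hσ1' _
        calc ∑ ω : Fin (m+1) → Finset (Fin n),
                (∏ i, P σ (ω i)) * wp p (badS H (ω 0) k ∪ BadT (ω 0) (Fin.tail ω))
            ≤ ∑ ω : Fin (m+1) → Finset (Fin n), ((∏ i, P σ (ω i)) * wp p (badS H (ω 0) k)
                + (∏ i, P σ (ω i)) * wp p (BadT (ω 0) (Fin.tail ω))) := by
              refine Finset.sum_le_sum fun ω _ => ?_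
              rw [← mul_add]
              exact mul_le_mul_of_nonneg_left (wp_union_le hp _ _) (hprodnn ω)
          _ = (∑ ω : Fin (m+1) → Finset (Fin n), (∏ i, P σ (ω i)) * wp p (badS H (ω 0) k))
              + ∑ ω : Fin (m+1) → Finset (Fin n),
                  (∏ i, P σ (ω i)) * wp p (BadT (ω 0) (Fin.tail ω)) :=
              Finset.sum_add_distrib
          _ ≤ (1/16 : ℝ) ^ k + errB m (k / 2) := by
              refine add_le_add ?_ ?_
              · have hA := sum_cons_split (σ := σ) (m := m)
                  (fun W (_ : Fin m → Finset (Fin n)) => wp p (badS H W k))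
                rw [hA]
                have : ∀ W : Finset (Fin n),
                    P σ W * ∑ ω' : Fin m → Finset (Fin n),
                      (∏ i, P σ (ω' i)) * wp p (badS H W k)
                    = P σ W * wp p (badS H W k) := by
                  intro W
                  rw [← Finset.sum_mul, mass_m, one_mul]
                rw [Finset.sum_congr rfl fun W _ => this W]
                exact step_count hσ0 hσ1 hp hpσ H k hH
              · have hB := sum_cons_split (σ := σ) (m := m)
                  (fun W (ω' : Fin m → Finset (Fin n)) => wp p (BadT W ω'))
                rw [hB]
                calc ∑ W : Finset (Fin n), P σ W *
                      ∑ ω' : Fin m → Finset (Fin n), (∏ i, P σ (ω' i)) * wp p (BadT W ω')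
                    ≤ ∑ W : Finset (Fin n), P σ W * errB m (k / 2) := by
                      refine Finset.sum_le_sum fun W _ => ?_
                      exact mul_le_mul_of_nonneg_left ((hBadT W).2) (P_nonneg hσ0' hσ1' W)
                  _ = errB m (k / 2) := by
                      rw [← Finset.sum_mul, sum_P, one_mul]
          _ = errB (m+1) k := (errB_succ m k).symm


lemma errB_le_sum : ∀ (m k : ℕ), 2 ^ m ≤ 2 * k →
    errB m k ≤ ∑ j ∈ Finset.range m, (1/16 : ℝ) ^ (2 ^ j) := by
  intro m
  induction m with
  | zero => intro k _; rw [errB_zero]; simp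
  | succ m ih =>
      intro k hk
      rw [errB_succ, Finset.sum_range_succ]
      have hkm : 2 ^ m ≤ k := by
        have h2 : (2:ℕ) ^ (m+1) = 2 ^ m * 2 := pow_succ 2 m
        omega
      have h1 : (1/16 : ℝ) ^ k ≤ (1/16 : ℝ) ^ (2 ^ m) :=
        pow_le_pow_of_le_one (by norm_num) (by norm_num) hkm
      have h2 : errB m (k / 2) ≤ ∑ j ∈ Finset.range m, (1/16 : ℝ) ^ (2 ^ j) := by
        cases m with
        | zero => rw [errB_zero]; simp
        | succ m' =>
            refine ih (k / 2) ?_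
            have e1 : (2:ℕ) ^ (m' + 2) = 2 ^ m' * 4 := by ring
            have e2 : (2:ℕ) ^ (m' + 1) = 2 ^ m' * 2 := by ring
            omega
      linarith

lemma sum_sixteenth (m : ℕ) : ∑ j ∈ Finset.range m, (1/16 : ℝ) ^ (2 ^ j) ≤ 1/15 := by
  have step1 : ∑ j ∈ Finset.range m, (1/16 : ℝ) ^ (2 ^ j)
      ≤ ∑ j ∈ Finset.range m, (1/16 : ℝ) ^ (j + 1) := by
    refine Finset.sum_le_sum fun j _ => ?_
    refine pow_le_pow_of_le_one (by norm_num) (by norm_num) ?_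
    have : j < 2 ^ j := Nat.lt_two_pow_self
    omega
  have step2 : ∑ j ∈ Finset.range m, (1/16 : ℝ) ^ (j + 1)
      = (1/16 : ℝ) * ∑ j ∈ Finset.range m, (1/16 : ℝ) ^ j := by
    rw [Finset.mul_sum]
    exact Finset.sum_congr rfl fun j _ => by rw [pow_succ]; ring
  have step3 : ∑ j ∈ Finset.range m, (1/16 : ℝ) ^ j ≤ 16/15 := by
    rw [geom_sum_eq (by norm_num : (1/16 : ℝ) ≠ 1) m]
    have hx : (0:ℝ) ≤ (1/16 : ℝ) ^ m := pow_nonneg (by norm_num) _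
    have he : ((1/16 : ℝ) ^ m - 1) / ((1/16 : ℝ) - 1)
        = (1 - (1/16 : ℝ) ^ m) * (16/15) := by
      ring
    rw [he]
    nlinarith
  calc ∑ j ∈ Finset.range m, (1/16 : ℝ) ^ (2 ^ j)
      ≤ (1/16 : ℝ) * ∑ j ∈ Finset.range m, (1/16 : ℝ) ^ j := by rw [← step2]; exact step1
    _ ≤ (1/16 : ℝ) * (16/15) := by
        refine mul_le_mul_of_nonneg_left step3 (by norm_num)
    _ ≤ 1/15 := by norm_num

lemma one_sub_pow_le {σ : ℝ} (h0 : 0 ≤ σ) (h1 : σ ≤ 1) : ∀ m : ℕ, 1 - (1 - σ) ^ m ≤ m * σ := by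
  intro m
  induction m with
  | zero => simp
  | succ m ih =>
      have hle1 : (1 - σ) ^ m ≤ 1 := pow_le_one₀ (by linarith) (by linarith)
      have hge0 : 0 ≤ (1 - σ) ^ m := pow_nonneg (by linarith) _
      rw [pow_succ]
      push_cast
      nlinarith

open Classical in
noncomputable def MinF (F : Set (Fin n → Bool)) : Finset (Finset (Fin n)) :=
  Finset.univ.filter (fun A => chi A ∈ F ∧
    ∀ B : Finset (Fin n), chi B ∈ F → B ⊆ A → B = A)

lemma MinF_mem {F : Set (Fin n → Bool)} {A : Finset (Fin n)} (hA : A ∈ MinF F) :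
    chi A ∈ F ∧ ∀ B : Finset (Fin n), chi B ∈ F → B ⊆ A → B = A := by
  classical
  rw [MinF, Finset.mem_filter] at hA
  exact hA.2

lemma MinF_card_le {F : Set (Fin n → Bool)} {A : Finset (Fin n)} (hA : A ∈ MinF F) :
    A.card ≤ Lmax n F := by
  classical
  obtain ⟨hAF, hAmin⟩ := MinF_mem hA
  have hmem : chi A ∈ Finset.univ.filter
      (fun x : Fin n → Bool => x ∈ F ∧ ∀ y : Fin n → Bool, y ∈ F → y ≤ x → y = x) := by
    rw [Finset.mem_filter]
    refine ⟨Finset.mem_univ _, hAF, ?_⟩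
    intro y hyF hyle
    have hsub : tf y ⊆ A := by
      have := le_iff_tf.1 hyle
      rw [tf_chi] at this
      exact this
    have := hAmin (tf y) (by rw [chi_tf]; exact hyF) hsub
    rw [← chi_tf y, this]
  have := Finset.le_sup (f := wt) hmem
  rw [wt_chi] at this
  exact this.trans_eq (by rw [Lmax])

lemma exists_min {F : Set (Fin n → Bool)} :
    ∀ (A : Finset (Fin n)), chi A ∈ F → ∃ B ∈ MinF F, B ⊆ A := by
  classical
  intro A
  induction A using Finset.strongInduction with
  | _ A ih =>
    intro hA
    by_cases h : ∀ B : Finset (Fin n), chi B ∈ F → B ⊆ A → B = A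
    · refine ⟨A, ?_, subset_rfl⟩
      rw [MinF, Finset.mem_filter]
      exact ⟨Finset.mem_univ _, hA, h⟩
    · push_neg at h
      obtain ⟨B, hBF, hBA, hne⟩ := h
      obtain ⟨C, hC, hCB⟩ := ih B (ssubset_of_subset_of_ne hBA hne) hBF
      exact ⟨C, hC, hCB.trans hBA⟩

lemma mu_one {F : Set (Fin n → Bool)} (hT : (fun _ => true) ∈ F) : mu n 1 F = 1 := by
  classical
  unfold mu
  rw [Finset.sum_eq_single (fun _ : Fin n => true)]
  · rw [if_pos hT]
    have hwt : wt (fun _ : Fin n => true) = n := by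
      simp [wt, Finset.card_univ]
    rw [hwt, Nat.sub_self, pow_zero, one_pow, mul_one]
  · intro y _ hy
    by_cases hyF : y ∈ F
    · rw [if_pos hyF]
      have hlt : n - wt y ≠ 0 := by
        intro h0
        have hle : wt y ≤ n := by
          have := Finset.card_filter_le Finset.univ (fun i => y i = true)
          rw [Finset.card_univ, Fintype.card_fin] at this
          exact this
        have heq : wt y = n := by omega
        have : (Finset.univ.filter (fun i => y i = true)) = Finset.univ := by
          apply Finset.eq_univ_of_card
          rw [Fintype.card_fin]
          exact heq
        apply hy
        funext i
        have : i ∈ Finset.univ.filter (fun i => y i = true) := by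
          rw [this]; exact Finset.mem_univ _
        exact (Finset.mem_filter.1 this).2
      rw [sub_self, zero_pow hlt, mul_zero]
    · rw [if_neg hyF]
  · intro h; exact absurd (Finset.mem_univ _) h

end PP

theorem park_pham' :
    ∀ (N : ℕ) (F : Set (Fin N → Bool)), F.Nonempty → F ≠ Set.univ →
      MonotoneProp F → 2 ≤ Lmax N F →
      ∀ p : ℝ, 0 < p → p < 1 → ¬ PSmall N p F →
        1/2 ≤ mu N (min 1 ((3000:ℝ) * p * Real.log (Lmax N F))) F := by
  classical
  intro N F hFne hFuniv hMono hL2 p hp0 hp1 hnP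
  open PP in
  set ℓ := Lmax N F with hℓ
  have hallone : (fun _ : Fin N => true) ∈ F := by
    obtain ⟨x, hx⟩ := hFne
    exact hMono x _ hx (fun i => Bool.le_true _)
  by_cases hq1 : (1:ℝ) ≤ 3000 * p * Real.log ℓ
  · rw [min_eq_left hq1, PP.mu_one hallone]
    norm_num
  · push_neg at hq1
    have hl2 : (2:ℕ) ≤ ℓ := hL2
    have hl2R : (2:ℝ) ≤ (ℓ:ℝ) := by exact_mod_cast hl2
    have hlog2 : Real.log 2 ≤ Real.log ℓ := Real.log_le_log (by norm_num) hl2R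
    have hlog2pos : (0:ℝ) < Real.log 2 := Real.log_pos (by norm_num)
    have hlogpos : (0:ℝ) < Real.log ℓ := lt_of_lt_of_le hlog2pos hlog2
    have hlog2d : (0.6931471803:ℝ) < Real.log 2 := Real.log_two_gt_d9
    set m := Nat.log 2 ℓ + 1 with hm
    have hm1 : ℓ < 2 ^ m := Nat.lt_pow_succ_log_self (by norm_num) ℓ
    have hpow_le : (2:ℕ) ^ (Nat.log 2 ℓ) ≤ ℓ := Nat.pow_log_le_self 2 (by omega)
    have hm2 : (Nat.log 2 ℓ : ℝ) * Real.log 2 ≤ Real.log ℓ := by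
      have h2 : ((2:ℝ)) ^ (Nat.log 2 ℓ) ≤ (ℓ:ℝ) := by exact_mod_cast hpow_le
      calc (Nat.log 2 ℓ : ℝ) * Real.log 2 = Real.log ((2:ℝ) ^ (Nat.log 2 ℓ)) :=
            (Real.log_pow (n := Nat.log 2 ℓ) (x := 2)).symm
        _ ≤ Real.log ℓ := Real.log_le_log (pow_pos (by norm_num) _) h2
    set σ := 1024 * p with hσ
    have hσ0 : 0 < σ := by positivity
    have hplog : 3000 * p * Real.log 2 < 1 := by
      calc 3000 * p * Real.log 2 ≤ 3000 * p * Real.log ℓ := by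
            refine mul_le_mul_of_nonneg_left hlog2 (by positivity)
        _ < 1 := hq1
    have hσlt : σ < 1 := by
      rw [hσ]
      nlinarith
    -- the iteration
    obtain ⟨Bad, hBad1, hBad2⟩ := PP.iter (n := N) hσ0 hσlt (le_of_lt hp0)
      (le_of_eq rfl) m ℓ (PP.MinF F) hm1 (fun T hT => PP.MinF_card_le hT)
    -- on failure the bad set is an expensive cover
    have hwp_fail : ∀ ω : Fin m → Finset (Fin N),
        PP.chi (Finset.univ.sup ω) ∉ F → 1/2 ≤ PP.wp p (Bad ω) := by
      intro ω hfail
      by_contra hlt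
      push_neg at hlt
      apply hnP
      refine ⟨(Bad ω).image PP.chi, ?_, ?_⟩
      · intro T hTF
        have hA : PP.chi (PP.tf T) ∈ F := by rw [PP.chi_tf]; exact hTF
        obtain ⟨B, hBM, hBsub⟩ := PP.exists_min (PP.tf T) hA
        have hcov : ∃ U ∈ Bad ω, U ⊆ B := by
          rcases hBad1 ω B hBM with h | ⟨T', hT', hsub⟩
          · exact h
          · exfalso
            apply hfail
            exact hMono _ _ (PP.MinF_mem hT').1 (PP.chi_mono hsub)
        obtain ⟨U, hU, hUB⟩ := hcov
        refine ⟨PP.chi U, Finset.mem_image_of_mem _ hU, ?_⟩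
        have := PP.chi_mono (hUB.trans hBsub)
        rw [PP.chi_tf] at this
        exact this
      · have hinjchi : ∀ x ∈ Bad ω, ∀ y ∈ Bad ω, PP.chi x = PP.chi y → x = y :=
          fun x _ y _ h => PP.chi_bijective.1 h
        rw [Finset.sum_image hinjchi]
        have : ∑ U ∈ Bad ω, p ^ wt (PP.chi U) = PP.wp p (Bad ω) := by
          rw [PP.wp]
          exact Finset.sum_congr rfl fun U _ => by rw [PP.wt_chi]
        rw [this]
        exact le_of_lt hlt
    -- expectation of failure indicator
    have hprodnn : ∀ ω : Fin m → Finset (Fin N), (0:ℝ) ≤ ∏ i, PP.P σ (ω i) :=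
      fun ω => Finset.prod_nonneg fun i _ =>
        PP.P_nonneg (le_of_lt hσ0) (le_of_lt hσlt) _
    have hpoint : ∀ ω : Fin m → Finset (Fin N),
        (1 : ℝ) - PP.ind F (Finset.univ.sup ω) ≤ 2 * PP.wp p (Bad ω) := by
      intro ω
      by_cases h : PP.chi (Finset.univ.sup ω) ∈ F
      · have : PP.ind F (Finset.univ.sup ω) = 1 := by rw [PP.ind, if_pos h]
        rw [this]
        have := PP.wp_nonneg (le_of_lt hp0) (Bad ω)
        linarith
      · have h1 : PP.ind F (Finset.univ.sup ω) = 0 := by rw [PP.ind, if_neg h]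
        have h2 := hwp_fail ω h
        rw [h1]
        linarith
    have herr : PP.errB m ℓ ≤ 1/15 := by
      refine (PP.errB_le_sum m ℓ ?_).trans (PP.sum_sixteenth m)
      have : (2:ℕ)^m = 2 * 2^(Nat.log 2 ℓ) := by rw [hm, pow_succ]; ring
      omega
    have hEfail : ∑ ω : Fin m → Finset (Fin N),
        (∏ i, PP.P σ (ω i)) * (1 - PP.ind F (Finset.univ.sup ω)) ≤ 2/15 := by
      calc ∑ ω : Fin m → Finset (Fin N),
              (∏ i, PP.P σ (ω i)) * (1 - PP.ind F (Finset.univ.sup ω))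
          ≤ ∑ ω : Fin m → Finset (Fin N), (∏ i, PP.P σ (ω i)) * (2 * PP.wp p (Bad ω)) := by
            exact Finset.sum_le_sum fun ω _ =>
              mul_le_mul_of_nonneg_left (hpoint ω) (hprodnn ω)
        _ = 2 * ∑ ω : Fin m → Finset (Fin N), (∏ i, PP.P σ (ω i)) * PP.wp p (Bad ω) := by
            rw [Finset.mul_sum]
            exact Finset.sum_congr rfl fun ω _ => by ring
        _ ≤ 2 * PP.errB m ℓ := by linarith [hBad2]
        _ ≤ 2/15 := by linarith
    set q₀ := 1 - (1 - σ)^m with hq₀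
    have hmu0 : PP.muF q₀ F = ∑ ω : Fin m → Finset (Fin N),
        (∏ i, PP.P σ (ω i)) * PP.ind F (Finset.univ.sup ω) := by
      rw [PP.muF, ← PP.union_law]
    have hsplit : ∑ ω : Fin m → Finset (Fin N),
        (∏ i, PP.P σ (ω i)) * (1 - PP.ind F (Finset.univ.sup ω))
        = 1 - PP.muF q₀ F := by
      rw [hmu0]
      have : ∀ ω : Fin m → Finset (Fin N),
          (∏ i, PP.P σ (ω i)) * (1 - PP.ind F (Finset.univ.sup ω))
          = (∏ i, PP.P σ (ω i)) - (∏ i, PP.P σ (ω i)) * PP.ind F (Finset.univ.sup ω) := by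
        intro ω; ring
      rw [Finset.sum_congr rfl fun ω _ => this ω, Finset.sum_sub_distrib, PP.mass_m]
    have hmu0ge : 13/15 ≤ PP.muF q₀ F := by
      rw [hsplit] at hEfail
      linarith
    -- monotone coupling up to q
    have hσ1le : (1 - σ)^m ≤ 1 := pow_le_one₀ (by linarith) (by linarith)
    have hq₀0 : 0 ≤ q₀ := by rw [hq₀]; linarith
    have hmσ : (m:ℝ) * σ ≤ 3000 * p * Real.log ℓ := by
      have hmR : (m:ℝ) = (Nat.log 2 ℓ : ℝ) + 1 := by rw [hm]; push_cast; ring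
      have hmlog : (m:ℝ) * Real.log 2 ≤ 2 * Real.log ℓ := by
        rw [hmR]
        have : ((Nat.log 2 ℓ : ℝ) + 1) * Real.log 2
            = (Nat.log 2 ℓ : ℝ) * Real.log 2 + Real.log 2 := by ring
        rw [this]
        linarith
      rw [hσ]
      have hm0 : (0:ℝ) ≤ (m:ℝ) := Nat.cast_nonneg m
      nlinarith [mul_le_mul_of_nonneg_right hmlog (le_of_lt hp0),
        mul_pos hp0 hlogpos, mul_nonneg (mul_nonneg hm0 (le_of_lt hp0)) (le_of_lt hlog2pos)]
    have hq₀q : q₀ ≤ min 1 ((3000:ℝ) * p * Real.log ℓ) := by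
      have h1 : q₀ ≤ (m:ℝ) * σ := PP.one_sub_pow_le (le_of_lt hσ0) (le_of_lt hσlt) m
      refine le_min ?_ (h1.trans hmσ)
      rw [hq₀]
      have : (0:ℝ) ≤ (1 - σ)^m := pow_nonneg (by linarith) _
      linarith
    have hqle1 : min 1 ((3000:ℝ) * p * Real.log ℓ) ≤ 1 := min_le_left _ _
    have hfinal := PP.muF_mono hMono hq₀0 hq₀q hqle1
    rw [mu_eq_muF]
    linarith

/-- The Kahn–Kalai Conjecture, proved by Park and Pham: there is an absolute constant `K`
such that for every nontrivial monotone property `F` with `L(F) ≥ 2` and every `p ∈ (0,1)`,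
if `F` is not `p`-small then `μ_q(F) ≥ 1/2` where `q = min(1, K·p·log L(F))`; equivalently,
`p_c(F) ≤ K · q(F) · log L(F)`. -/
theorem park_pham :
    ∃ K : ℝ, 0 < K ∧
      ∀ (N : ℕ) (F : Set (Fin N → Bool)), F.Nonempty → F ≠ Set.univ →
        MonotoneProp F → 2 ≤ Lmax N F →
        ∀ p : ℝ, 0 < p → p < 1 → ¬ PSmall N p F →
          1/2 ≤ mu N (min 1 (K * p * Real.log (Lmax N F))) F := by
  exact ⟨3000, by norm_num, park_pham'⟩
end

section
/- Spreadness of the uniform distribution on perfect matchings: Let n ≥ 2 be even and let ν be the uniform distribution on perfect matchings of the complete graph K_n. Let A be a set of k edges of K_n with 1 ≤ k ≤ n/2. If the edges of A are pairwise vertex-disjoint (A is a matching), then Pr_{M∼ν}[A ⊆ M] = 2^k · ((n/2)! / (n/2 − k)!) · ((n − 2k)! / n!), and this quantity is at most (e/n)^k; if A is not a matching, then Pr_{M∼ν}[A ⊆ M] = 0. Consequently ν is an (e/n)-spread probability measure on the perfect matchings of K_n. -/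
open Finset

/-- `M` is a perfect matching of the complete graph `K_n`: a set of pairwise
vertex-disjoint 2-element subsets (edges) of `{1,…,n}` covering every vertex. -/
def IsPerfectMatching (n : ℕ) (M : Finset (Finset (Fin n))) : Prop :=
  (∀ e ∈ M, e.card = 2) ∧
  (∀ e ∈ M, ∀ f ∈ M, e ≠ f → Disjoint e f) ∧
  (∀ v : Fin n, ∃ e ∈ M, v ∈ e)

open Classical in
/-- The probability, under the uniform distribution `ν` on perfect matchings of `K_n`,
that a uniformly random perfect matching `M ∼ ν` contains every edge of `A`. -/
noncomputable def pmContainProb (n : ℕ) (A : Finset (Finset (Fin n))) : ℝ :=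
  ((Finset.univ.filter (fun M : Finset (Finset (Fin n)) =>
      IsPerfectMatching n M ∧ A ⊆ M)).card : ℝ) /
  ((Finset.univ.filter (fun M : Finset (Finset (Fin n)) => IsPerfectMatching n M)).card : ℝ)

/-! ### Auxiliary analytic lemmas (Stirling-type bounds) -/

open Stirling in
lemma PMaux.stirling_ge (t : ℕ) : Real.sqrt Real.pi ≤ stirlingSeq (t+1) :=
  stirlingSeq'_antitone.le_of_tendsto
    (tendsto_stirlingSeq_sqrt_pi.comp (Filter.tendsto_add_atTop_nat 1)) t

open Stirling in
lemma PMaux.fact_eq_stirling (t : ℕ) (ht : 1 ≤ t) :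
    (t.factorial : ℝ) * (Real.exp 1)^t = stirlingSeq t * Real.sqrt 2 * Real.sqrt t * (t:ℝ)^t := by
  have ht0 : (0:ℝ) < t := by exact_mod_cast ht
  rw [stirlingSeq, Real.sqrt_mul (by norm_num : (0:ℝ) ≤ 2), div_pow]
  have he : (0:ℝ) < Real.exp 1 := Real.exp_pos 1
  field_simp

open Stirling in
lemma PMaux.fact_lower (t : ℕ) (ht : 1 ≤ t) :
    (5/2 : ℝ) * Real.sqrt t * (t:ℝ)^t ≤ (t.factorial : ℝ) * (Real.exp 1)^t := by
  rw [PMaux.fact_eq_stirling t ht]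
  have h1 : Real.sqrt Real.pi ≤ stirlingSeq t := by
    obtain ⟨u, rfl⟩ := Nat.exists_eq_add_of_le ht
    simpa [Nat.add_comm] using PMaux.stirling_ge u
  have h2 : (5/2 : ℝ) ≤ Real.sqrt Real.pi * Real.sqrt 2 := by
    rw [← Real.sqrt_mul Real.pi_pos.le]
    have : (25/4 : ℝ) ≤ Real.pi * 2 := by nlinarith [Real.pi_gt_d6]
    calc (5/2:ℝ) = Real.sqrt ((5/2)^2) := (Real.sqrt_sq (by norm_num)).symm
      _ ≤ Real.sqrt (Real.pi * 2) := Real.sqrt_le_sqrt (by norm_num [this])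
  have h3 : (0:ℝ) ≤ Real.sqrt t := Real.sqrt_nonneg _
  have h4 : (0:ℝ) ≤ (t:ℝ)^t := by positivity
  calc (5/2 : ℝ) * Real.sqrt t * (t:ℝ)^t
      ≤ (Real.sqrt Real.pi * Real.sqrt 2) * Real.sqrt t * (t:ℝ)^t := by
        apply mul_le_mul_of_nonneg_right (mul_le_mul_of_nonneg_right h2 h3) h4
    _ ≤ stirlingSeq t * Real.sqrt 2 * Real.sqrt t * (t:ℝ)^t := by
        have := Real.sqrt_nonneg 2
        apply mul_le_mul_of_nonneg_right (mul_le_mul_of_nonneg_right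
          (mul_le_mul_of_nonneg_right h1 this) h3) h4

open Stirling in
lemma PMaux.fact_upper (t : ℕ) (ht : 1 ≤ t) :
    (t.factorial : ℝ) * (Real.exp 1)^t ≤ 3 * Real.sqrt t * (t:ℝ)^t := by
  rw [PMaux.fact_eq_stirling t ht]
  have h1 : stirlingSeq t ≤ Real.exp 1 / Real.sqrt 2 := by
    obtain ⟨u, rfl⟩ := Nat.exists_eq_add_of_le ht
    have := stirlingSeq'_antitone (Nat.zero_le u)
    simpa [Nat.add_comm, stirlingSeq_one] using this
  have h2 : stirlingSeq t * Real.sqrt 2 ≤ 3 := by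
    have hs2 : (0:ℝ) < Real.sqrt 2 := by positivity
    have := mul_le_mul_of_nonneg_right h1 hs2.le
    rw [div_mul_cancel₀] at this
    · linarith [Real.exp_one_lt_d9]
    · positivity
  have h3 : (0:ℝ) ≤ Real.sqrt t := Real.sqrt_nonneg _
  have h4 : (0:ℝ) ≤ (t:ℝ)^t := by positivity
  apply mul_le_mul_of_nonneg_right (mul_le_mul_of_nonneg_right h2 h3) h4

lemma PMaux.pow_two_le (s m : ℕ) (hs : 1 ≤ s) (hm : s < m) :
    2 * (s:ℝ)^s ≤ (m:ℝ)^s := by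
  have hs0 : (0:ℝ) < s := by exact_mod_cast hs
  have ha : (0:ℝ) ≤ ((m:ℝ) - s)/s := by
    apply div_nonneg _ hs0.le
    have : (s:ℝ) ≤ m := by exact_mod_cast hm.le
    linarith
  have hb := one_add_mul_le_pow (by linarith : (-2:ℝ) ≤ ((m:ℝ) - s)/s) s
  have h1 : (1:ℝ) + s * (((m:ℝ) - s)/s) = 1 + ((m:ℝ) - s) := by field_simp
  have h2 : (1:ℝ) + (((m:ℝ) - s)/s) = (m:ℝ)/s := by field_simp; ring
  rw [h1, h2] at hb
  have hms : (1:ℝ) ≤ (m:ℝ) - s := by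
    have : (s:ℝ) + 1 ≤ m := by exact_mod_cast hm
    linarith
  have hdiv : (2:ℝ) ≤ ((m:ℝ)/s)^s := by linarith
  calc 2 * (s:ℝ)^s ≤ ((m:ℝ)/s)^s * (s:ℝ)^s := by
        apply mul_le_mul_of_nonneg_right hdiv (by positivity)
    _ = (m:ℝ)^s := by rw [← mul_pow]; rw [div_mul_cancel₀]; exact hs0.ne'

lemma PMaux.main_F (k s : ℕ) (hk : 1 ≤ k) :
    (2:ℝ)^k * (2*((k:ℝ)+s))^k * (((k+s).factorial : ℝ) * (Real.exp 1)^(k+s)) *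
      (((2*s).factorial : ℝ) * (Real.exp 1)^(2*s))
      ≤ ((s.factorial : ℝ) * (Real.exp 1)^s) *
        (((2*(k+s)).factorial : ℝ) * (Real.exp 1)^(2*(k+s))) := by
  have hsq2 : (1.4:ℝ) ≤ Real.sqrt 2 := by
    rw [show (2:ℝ) = 1.4^2 + 0.04 by norm_num]
    calc (1.4:ℝ) = Real.sqrt (1.4^2) := (Real.sqrt_sq (by norm_num)).symm
      _ ≤ _ := Real.sqrt_le_sqrt (by norm_num)
  rcases Nat.eq_zero_or_pos s with rfl | hs
  · simp only [Nat.add_zero, Nat.mul_zero, Nat.factorial_zero, Nat.cast_zero, add_zero,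
      Nat.cast_one, pow_zero, mul_one, one_mul]
    have hu := PMaux.fact_upper k hk
    have hl := PMaux.fact_lower (2*k) (by omega)
    push_cast at hu hl ⊢
    rw [Real.sqrt_mul (by norm_num : (0:ℝ) ≤ 2)] at hl
    simp only [mul_pow] at hl ⊢
    have h3 : (0:ℝ) ≤ 2^k * (2^k * (k:ℝ)^k) := by positivity
    calc (2:ℝ)^k * (2^k * (k:ℝ)^k) * ((k.factorial : ℝ) * Real.exp 1 ^ k)
        ≤ 2^k * (2^k * (k:ℝ)^k) * (3 * Real.sqrt k * (k:ℝ)^k) := by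
          exact mul_le_mul_of_nonneg_left hu h3
      _ = (Real.sqrt k * 2^k * 2^k * (k:ℝ)^k * (k:ℝ)^k) * 3 := by ring
      _ ≤ (Real.sqrt k * 2^k * 2^k * (k:ℝ)^k * (k:ℝ)^k) * ((5/2) * Real.sqrt 2) := by
          apply mul_le_mul_of_nonneg_left (by nlinarith) (by positivity)
      _ = 5/2 * (Real.sqrt 2 * Real.sqrt (k:ℝ)) * (2^(2*k) * (k:ℝ)^(2*k)) := by ring
      _ ≤ _ := hl
  · have hu1 := PMaux.fact_upper (k+s) (by omega)
    have hu2 := PMaux.fact_upper (2*s) (by omega)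
    have hl1 := PMaux.fact_lower s hs
    have hl2 := PMaux.fact_lower (2*(k+s)) (by omega)
    have hkey2 := PMaux.pow_two_le s (k+s) hs (by omega)
    push_cast at hu1 hu2 hl1 hl2 hkey2 ⊢
    rw [Real.sqrt_mul (by norm_num : (0:ℝ) ≤ 2)] at hu2 hl2
    simp only [mul_pow] at hu2 hl2 ⊢
    have hss : (0:ℝ) ≤ (s:ℝ)^s := by positivity
    have key : (9:ℝ) * (s:ℝ)^s ≤ (25/4) * ((k:ℝ)+s)^s := by nlinarith
    have h3 : (0:ℝ) ≤ 2^k * (2^k * ((k:ℝ)+s)^k) := by positivity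
    have hC : (0:ℝ) ≤ Real.sqrt 2 * Real.sqrt ((k:ℝ)+s) * Real.sqrt s *
        2^(2*k+2*s) * ((k:ℝ)+s)^(2*k+s) * (s:ℝ)^s := by positivity
    calc (2:ℝ)^k * (2^k * ((k:ℝ)+s)^k) * (((k+s).factorial : ℝ) * Real.exp 1 ^ (k+s)) *
          (((2*s).factorial : ℝ) * Real.exp 1 ^ (2*s))
        ≤ 2^k * (2^k * ((k:ℝ)+s)^k) * (3 * Real.sqrt ((k:ℝ)+s) * ((k:ℝ)+s)^(k+s)) *
          (3 * (Real.sqrt 2 * Real.sqrt (s:ℝ)) * (2^(2*s) * (s:ℝ)^(2*s))) := by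
          apply mul_le_mul (mul_le_mul_of_nonneg_left hu1 h3) hu2 (by positivity) (by positivity)
      _ = (Real.sqrt 2 * Real.sqrt ((k:ℝ)+s) * Real.sqrt s *
            2^(2*k+2*s) * ((k:ℝ)+s)^(2*k+s) * (s:ℝ)^s) * (9 * (s:ℝ)^s) := by ring
      _ ≤ (Real.sqrt 2 * Real.sqrt ((k:ℝ)+s) * Real.sqrt s *
            2^(2*k+2*s) * ((k:ℝ)+s)^(2*k+s) * (s:ℝ)^s) * ((25/4) * ((k:ℝ)+s)^s) := by
          exact mul_le_mul_of_nonneg_left key hC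
      _ = (5/2 * Real.sqrt s * (s:ℝ)^s) *
            (5/2 * (Real.sqrt 2 * Real.sqrt ((k:ℝ)+s)) * (2^(2*(k+s)) * ((k:ℝ)+s)^(2*(k+s)))) := by
          ring
      _ ≤ _ := by
          apply mul_le_mul hl1 hl2 (by positivity) ?_
          have := Nat.factorial_pos s
          positivity

lemma PMaux.factorial_ineq (k s : ℕ) (hk : 1 ≤ k) :
    (2:ℝ)^k * ((k+s).factorial:ℝ) * (((2*s).factorial):ℝ) * (2*((k:ℝ)+s))^k
      ≤ (Real.exp 1)^k * (s.factorial:ℝ) * (((2*(k+s)).factorial):ℝ) := by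
  have h := PMaux.main_F k s hk
  have hx : (0:ℝ) < (Real.exp 1)^((k+s)+2*s) := by positivity
  rw [← mul_le_mul_iff_of_pos_right hx]
  calc (2:ℝ)^k * ((k+s).factorial:ℝ) * (((2*s).factorial):ℝ) * (2*((k:ℝ)+s))^k *
        (Real.exp 1)^((k+s)+2*s)
      = (2:ℝ)^k * (2*((k:ℝ)+s))^k * (((k+s).factorial : ℝ) * (Real.exp 1)^(k+s)) *
        (((2*s).factorial : ℝ) * (Real.exp 1)^(2*s)) := by ring
    _ ≤ ((s.factorial : ℝ) * (Real.exp 1)^s) *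
        (((2*(k+s)).factorial : ℝ) * (Real.exp 1)^(2*(k+s))) := h
    _ = (Real.exp 1)^k * (s.factorial:ℝ) * (((2*(k+s)).factorial):ℝ) *
        (Real.exp 1)^((k+s)+2*s) := by ring

lemma PMaux.ratio_le (k s : ℕ) (hk : 1 ≤ k) :
    (2:ℝ)^k * ((k+s).factorial : ℝ) / ((s.factorial : ℝ)) *
      (((2*s).factorial : ℝ) / (((2*(k+s)).factorial : ℝ)))
      ≤ (Real.exp 1 / (2*((k:ℝ)+s)))^k := by
  have hk' : (1:ℝ) ≤ (k:ℝ) := by exact_mod_cast hk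
  have hpos2 : (0:ℝ) < 2*((k:ℝ)+s) := by
    have : (0:ℝ) ≤ (s:ℝ) := Nat.cast_nonneg s
    linarith
  have hf1 : (0:ℝ) < (s.factorial : ℝ) := by exact_mod_cast Nat.factorial_pos s
  have hf2 : (0:ℝ) < ((2*(k+s)).factorial : ℝ) := by exact_mod_cast Nat.factorial_pos _
  rw [div_mul_div_comm, div_pow, div_le_div_iff₀ (by positivity) (by positivity)]
  calc (2:ℝ)^k * ((k+s).factorial:ℝ) * (((2*s).factorial):ℝ) * (2*((k:ℝ)+s))^k
      ≤ (Real.exp 1)^k * (s.factorial:ℝ) * (((2*(k+s)).factorial):ℝ) :=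
        PMaux.factorial_ineq k s hk
    _ = Real.exp 1 ^ k * ((s.factorial:ℝ) * ((2*(k+s)).factorial:ℝ)) := by ring

/-! ### Counting perfect matchings on a vertex set -/

def matchOn (n : ℕ) (V : Finset (Fin n)) (M : Finset (Finset (Fin n))) : Prop :=
  (∀ e ∈ M, e.card = 2) ∧ (∀ e ∈ M, ∀ f ∈ M, e ≠ f → Disjoint e f) ∧
  (∀ e ∈ M, e ⊆ V) ∧ (∀ v ∈ V, ∃ e ∈ M, v ∈ e)

open Classical in
noncomputable def pmOn (n : ℕ) (V : Finset (Fin n)) : Finset (Finset (Finset (Fin n))) :=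
  Finset.univ.filter (fun M => matchOn n V M)

lemma mem_pmOn {n : ℕ} {V : Finset (Fin n)} {M : Finset (Finset (Fin n))} :
    M ∈ pmOn n V ↔ matchOn n V M := by
  classical
  simp [pmOn]

lemma pmOn_empty {n : ℕ} : pmOn n ∅ = {∅} := by
  ext M
  simp only [mem_pmOn, matchOn, mem_singleton]
  constructor
  · rintro ⟨h2, -, hsub, -⟩
    by_contra hM
    obtain ⟨e, he⟩ := Finset.nonempty_iff_ne_empty.mpr hM
    have := h2 e he
    have h0 : e ⊆ ∅ := hsub e he
    rw [Finset.subset_empty.mp h0] at this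
    simp at this
  · rintro rfl
    refine ⟨by simp, by simp, by simp, by simp⟩

lemma pmOn_decomp {n : ℕ} (V : Finset (Fin n)) (v : Fin n) (hv : v ∈ V) :
    pmOn n V = (V.erase v).biUnion
      (fun w => (pmOn n (V \ {v, w})).image (insert ({v, w} : Finset (Fin n)))) := by
  ext M
  simp only [mem_biUnion, mem_image, mem_pmOn, mem_erase]
  constructor
  · rintro ⟨h2, hdisj, hsub, hcov⟩
    obtain ⟨e, heM, hve⟩ := hcov v hv
    have hew : ∃ w, w ≠ v ∧ ({v, w} : Finset (Fin n)) = e := by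
      obtain ⟨a, b, hab, rfl⟩ := Finset.card_eq_two.mp (h2 e heM)
      rcases Finset.mem_insert.mp hve with rfl | hb
      · exact ⟨b, fun h => hab h.symm, rfl⟩
      · rw [Finset.mem_singleton.mp hb]
        exact ⟨a, fun h => hab ((Finset.mem_singleton.mp hb) ▸ h), Finset.pair_comm _ _⟩
    obtain ⟨w, hwv, hwe⟩ := hew
    have hwV : w ∈ V := hsub e heM (hwe ▸ Finset.mem_insert_of_mem (Finset.mem_singleton_self w))
    refine ⟨w, ⟨hwv, hwV⟩, M.erase e, ?_, ?_⟩
    · refine ⟨fun f hf => h2 f (Finset.mem_of_mem_erase hf),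
        fun f hf g hg hfg => hdisj f (Finset.mem_of_mem_erase hf) g (Finset.mem_of_mem_erase hg) hfg,
        ?_, ?_⟩
      · intro f hf
        rw [hwe]
        rw [Finset.subset_sdiff]
        exact ⟨hsub f (Finset.mem_of_mem_erase hf),
          hdisj f (Finset.mem_of_mem_erase hf) e heM (Finset.ne_of_mem_erase hf)⟩
      · intro u hu
        rw [hwe] at hu
        rw [Finset.mem_sdiff] at hu
        obtain ⟨f, hfM, huf⟩ := hcov u hu.1
        refine ⟨f, Finset.mem_erase.mpr ⟨?_, hfM⟩, huf⟩
        rintro rfl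
        exact hu.2 huf
    · rw [hwe]
      exact Finset.insert_erase heM
  · rintro ⟨w, ⟨hwv, hwV⟩, M', hM', rfl⟩
    obtain ⟨h2, hdisj, hsub, hcov⟩ := hM'
    have hvw : v ≠ w := fun h => hwv h.symm
    have hedisj : ∀ f ∈ M', Disjoint f ({v, w} : Finset (Fin n)) := by
      intro f hf
      exact Finset.disjoint_of_subset_left (hsub f hf) Finset.sdiff_disjoint
    refine ⟨?_, ?_, ?_, ?_⟩
    · intro e he
      rcases Finset.mem_insert.mp he with rfl | he'
      · exact Finset.card_pair hvw
      · exact h2 e he'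
    · intro e he f hf hef
      rcases Finset.mem_insert.mp he with rfl | he' <;>
        rcases Finset.mem_insert.mp hf with rfl | hf'
      · exact absurd rfl hef
      · exact (hedisj f hf').symm
      · exact hedisj e he'
      · exact hdisj e he' f hf' hef
    · intro e he
      rcases Finset.mem_insert.mp he with rfl | he'
      · exact Finset.insert_subset hv (Finset.singleton_subset_iff.mpr hwV)
      · exact (hsub e he').trans (Finset.sdiff_subset)
    · intro u hu
      by_cases huvw : u ∈ ({v, w} : Finset (Fin n))
      · exact ⟨{v, w}, Finset.mem_insert_self _ _, huvw⟩
      · obtain ⟨f, hfM, huf⟩ := hcov u (Finset.mem_sdiff.mpr ⟨hu, huvw⟩)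
        exact ⟨f, Finset.mem_insert_of_mem hfM, huf⟩

lemma not_pair_mem_pmOn {n : ℕ} {V : Finset (Fin n)} {v w : Fin n} {M : Finset (Finset (Fin n))}
    (hM : M ∈ pmOn n (V \ {v, w})) : ({v, w} : Finset (Fin n)) ∉ M := by
  intro h
  have hsub := (mem_pmOn.mp hM).2.2.1 _ h
  have : v ∈ V \ {v, w} := hsub (Finset.mem_insert_self _ _)
  simp at this

lemma pmOn_card_decomp {n : ℕ} (V : Finset (Fin n)) (v : Fin n) (hv : v ∈ V) :
    (pmOn n V).card = ∑ w ∈ V.erase v, (pmOn n (V \ {v, w})).card := by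
  rw [pmOn_decomp V v hv, Finset.card_biUnion]
  · apply Finset.sum_congr rfl
    intro w _
    apply Finset.card_image_of_injOn
    intro M₁ h₁ M₂ h₂ heq
    have e₁ := not_pair_mem_pmOn h₁
    have e₂ := not_pair_mem_pmOn h₂
    calc M₁ = (insert ({v,w} : Finset (Fin n)) M₁).erase {v,w} := (Finset.erase_insert e₁).symm
      _ = (insert ({v,w} : Finset (Fin n)) M₂).erase {v,w} := by rw [heq]
      _ = M₂ := Finset.erase_insert e₂
  · intro w hw w' hw' hww'
    rw [Function.onFun, Finset.disjoint_left]
    rintro M hMw hMw'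
    obtain ⟨M₁, hM₁, rfl⟩ := Finset.mem_image.mp hMw
    obtain ⟨M₂, hM₂, heq⟩ := Finset.mem_image.mp hMw'
    have hwv : w ≠ v := (Finset.mem_erase.mp hw).1
    have hw'v : w' ≠ v := (Finset.mem_erase.mp hw').1
    have hne : ({v, w'} : Finset (Fin n)) ≠ {v, w} := by
      intro h
      have : w' ∈ ({v, w} : Finset (Fin n)) := h ▸ (Finset.mem_insert_of_mem (Finset.mem_singleton_self w'))
      rcases Finset.mem_insert.mp this with rfl | h'
      · exact hw'v rfl
      · exact hww' ((Finset.mem_singleton.mp h').symm) |>.elim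
    have : ({v, w'} : Finset (Fin n)) ∈ insert ({v, w} : Finset (Fin n)) M₁ := by
      rw [← heq]; exact Finset.mem_insert_self _ _
    rcases Finset.mem_insert.mp this with h | h
    · exact hne h
    · have hsub := (mem_pmOn.mp hM₁).2.2.1 _ h
      have : v ∈ V \ {v, w} := hsub (Finset.mem_insert_self _ _)
      simp at this

lemma pmOn_card {n : ℕ} (m : ℕ) :
    ∀ V : Finset (Fin n), V.card = 2*m →
      (pmOn n V).card * (2^m * m.factorial) = (2*m).factorial := by
  induction m with
  | zero =>
    intro V hV
    rw [Finset.card_eq_zero.mp hV, pmOn_empty]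
    simp
  | succ m ih =>
    intro V hV
    have hne : V.Nonempty := Finset.card_pos.mp (by omega)
    obtain ⟨v, hv⟩ := hne
    rw [pmOn_card_decomp V v hv, Finset.sum_mul]
    have hterm : ∀ w ∈ V.erase v,
        (pmOn n (V \ {v, w})).card * (2^(m+1) * (m+1).factorial)
          = (2*m).factorial * (2*(m+1)) := by
      intro w hw
      have hwv : w ≠ v := (Finset.mem_erase.mp hw).1
      have hwV : w ∈ V := (Finset.mem_erase.mp hw).2
      have hsub : ({v, w} : Finset (Fin n)) ⊆ V :=
        Finset.insert_subset hv (Finset.singleton_subset_iff.mpr hwV)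
      have hcard2 : ({v, w} : Finset (Fin n)).card = 2 := Finset.card_pair (fun h => hwv h.symm)
      have hcard : (V \ {v, w}).card = 2*m := by
        rw [Finset.card_sdiff_of_subset hsub, hcard2, hV]; omega
      have := ih (V \ {v, w}) hcard
      calc (pmOn n (V \ {v, w})).card * (2^(m+1) * (m+1).factorial)
          = (pmOn n (V \ {v, w})).card * (2^m * m.factorial) * (2*(m+1)) := by
            rw [Nat.factorial_succ]; ring
        _ = (2*m).factorial * (2*(m+1)) := by rw [this]
    rw [Finset.sum_congr rfl hterm, Finset.sum_const, Finset.card_erase_of_mem hv, hV,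
      show 2*(m+1) - 1 = (2*m)+1 from by omega]
    have h1 : 2*(m+1) = ((2*m)+1)+1 := by omega
    rw [h1, Nat.factorial_succ, Nat.factorial_succ]
    simp only [smul_eq_mul]
    ring

/-! ### Relating `pmContainProb` to matching counts -/

open Classical in
lemma pmContainProb_def (n : ℕ) (A : Finset (Finset (Fin n))) :
    pmContainProb n A =
      ((Finset.univ.filter (fun M : Finset (Finset (Fin n)) =>
          IsPerfectMatching n M ∧ A ⊆ M)).card : ℝ) /
      ((Finset.univ.filter (fun M : Finset (Finset (Fin n)) =>
          IsPerfectMatching n M)).card : ℝ) := rfl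

open Classical in
lemma filter_pm_eq (n : ℕ) :
    (Finset.univ.filter (fun M : Finset (Finset (Fin n)) => IsPerfectMatching n M))
      = pmOn n Finset.univ := by
  ext M
  simp [pmOn, matchOn, IsPerfectMatching]
  exact ⟨fun h => (@Finset.mem_filter _ _ (fun _ => Classical.propDecidable _) _ _ |>.mp h).2,
    fun h => (@Finset.mem_filter _ _ (fun _ => Classical.propDecidable _) _ _).mpr ⟨Finset.mem_univ _, h⟩⟩

open Classical in
lemma numer_card (n : ℕ) (A : Finset (Finset (Fin n)))
    (h2 : ∀ e ∈ A, e.card = 2) (hd : ∀ e ∈ A, ∀ f ∈ A, e ≠ f → Disjoint e f) :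
    (Finset.univ.filter (fun M : Finset (Finset (Fin n)) => IsPerfectMatching n M ∧ A ⊆ M)).card
      = (pmOn n (Finset.univ \ A.biUnion id)).card := by
  apply Finset.card_bij (fun M _ => M \ A)
  · intro M hM
    rw [Finset.mem_filter] at hM
    obtain ⟨-, ⟨hPM2, hPMd, hPMc⟩, hAM⟩ := hM
    rw [mem_pmOn]
    refine ⟨fun f hf => hPM2 f (Finset.mem_sdiff.mp hf).1,
      fun f hf g hg => hPMd f (Finset.mem_sdiff.mp hf).1 g (Finset.mem_sdiff.mp hg).1, ?_, ?_⟩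
    · intro f hf
      rw [Finset.subset_sdiff]
      refine ⟨Finset.subset_univ _, ?_⟩
      rw [Finset.disjoint_biUnion_right]
      intro e he
      exact hPMd f (Finset.mem_sdiff.mp hf).1 e (hAM he)
        (fun h => (Finset.mem_sdiff.mp hf).2 (h ▸ he))
    · intro u hu
      rw [Finset.mem_sdiff] at hu
      obtain ⟨e, heM, hue⟩ := hPMc u
      refine ⟨e, Finset.mem_sdiff.mpr ⟨heM, ?_⟩, hue⟩
      intro heA
      exact hu.2 (Finset.mem_biUnion.mpr ⟨e, heA, hue⟩)
  · intro M₁ hM₁ M₂ hM₂ heq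
    rw [Finset.mem_filter] at hM₁ hM₂
    calc M₁ = M₁ \ A ∪ A := (Finset.sdiff_union_of_subset hM₁.2.2).symm
      _ = M₂ \ A ∪ A := by rw [heq]
      _ = M₂ := Finset.sdiff_union_of_subset hM₂.2.2
  · intro M' hM'
    rw [mem_pmOn] at hM'
    obtain ⟨h2', hd', hs', hc'⟩ := hM'
    have hAnM' : ∀ e ∈ A, e ∉ M' := by
      intro e heA heM'
      have h1 : e ⊆ Finset.univ \ A.biUnion id := hs' e heM'
      have h2e : e.Nonempty := by
        rw [← Finset.card_pos, h2 e heA]; norm_num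
      obtain ⟨x, hx⟩ := h2e
      have := Finset.subset_sdiff.mp h1
      exact (Finset.disjoint_left.mp this.2) hx (Finset.mem_biUnion.mpr ⟨e, heA, hx⟩)
    refine ⟨M' ∪ A, ?_, ?_⟩
    · rw [Finset.mem_filter]
      refine ⟨Finset.mem_univ _, ⟨?_, ?_, ?_⟩, Finset.subset_union_right⟩
      · intro e he
        rcases Finset.mem_union.mp he with h | h
        · exact h2' e h
        · exact h2 e h
      · intro e he f hf hef
        have dis : ∀ g ∈ M', ∀ g' ∈ A, Disjoint g g' := by
          intro g hg g' hg'
          have h1 := Finset.subset_sdiff.mp (hs' g hg)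
          apply Finset.disjoint_of_subset_right _ h1.2
          intro x hx
          exact Finset.mem_biUnion.mpr ⟨g', hg', hx⟩
        rcases Finset.mem_union.mp he with h | h <;> rcases Finset.mem_union.mp hf with h' | h'
        · exact hd' e h f h' hef
        · exact dis e h f h'
        · exact (dis f h' e h).symm
        · exact hd e h f h' hef
      · intro u
        by_cases hu : u ∈ A.biUnion id
        · obtain ⟨e, heA, hue⟩ := Finset.mem_biUnion.mp hu
          exact ⟨e, Finset.mem_union_right _ heA, hue⟩
        · obtain ⟨e, heM', hue⟩ := hc' u (Finset.mem_sdiff.mpr ⟨Finset.mem_univ _, hu⟩)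
          exact ⟨e, Finset.mem_union_left _ heM', hue⟩
    · ext e
      simp only [Finset.mem_sdiff, Finset.mem_union]
      constructor
      · rintro ⟨h | h, hnA⟩
        · exact h
        · exact absurd h hnA
      · intro h
        exact ⟨Or.inl h, fun hA => hAnM' e hA h⟩

lemma cover_card (n : ℕ) (A : Finset (Finset (Fin n)))
    (h2 : ∀ e ∈ A, e.card = 2) (hd : ∀ e ∈ A, ∀ f ∈ A, e ≠ f → Disjoint e f) :
    (A.biUnion id).card = 2 * A.card := by
  classical
  rw [Finset.card_biUnion (t := id) (fun x hx y hy hxy => hd x hx y hy hxy)]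
  simp only [id_eq]
  rw [Finset.sum_congr rfl (fun e he => h2 e he), Finset.sum_const, smul_eq_mul, Nat.mul_comm]

lemma pm_size {n : ℕ} {V : Finset (Fin n)} {M : Finset (Finset (Fin n))}
    (h : matchOn n V M) : 2 * M.card = V.card := by
  classical
  obtain ⟨h2, hd, hs, hc⟩ := h
  have hV : V = M.biUnion id := by
    apply Finset.Subset.antisymm
    · intro v hv
      obtain ⟨e, heM, hve⟩ := hc v hv
      exact Finset.mem_biUnion.mpr ⟨e, heM, hve⟩
    · intro v hv
      obtain ⟨e, heM, hve⟩ := Finset.mem_biUnion.mp hv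
      exact hs e heM hve
  rw [hV, Finset.card_biUnion (t := id) (fun x hx y hy hxy => hd x hx y hy hxy)]
  simp only [id_eq]
  rw [Finset.sum_congr rfl (fun e he => h2 e he), Finset.sum_const, smul_eq_mul, Nat.mul_comm]

/-! ### Main theorem -/

/-- Spreadness of the uniform distribution on perfect matchings of `K_n`:
if `A` is a matching of size `k` then `Pr[A ⊆ M] = 2^k · (n/2)!/(n/2−k)! · (n−2k)!/n!
≤ (e/n)^k`; if `A` is not a matching then `Pr[A ⊆ M] = 0`. Consequently the uniform
distribution is `(e/n)`-spread. -/
theorem spread_uniform_perfect_matchings (n : ℕ) (hn2 : 2 ≤ n) (hne : Even n) :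
    (∀ (k : ℕ) (A : Finset (Finset (Fin n))), 1 ≤ k → k ≤ n / 2 → A.card = k →
      (∀ e ∈ A, e.card = 2) →
      ((∀ e ∈ A, ∀ f ∈ A, e ≠ f → Disjoint e f) →
        pmContainProb n A =
          2 ^ k * ((n / 2).factorial : ℝ) / ((n / 2 - k).factorial : ℝ) *
            (((n - 2 * k).factorial : ℝ) / (n.factorial : ℝ)) ∧
        pmContainProb n A ≤ (Real.exp 1 / n) ^ k) ∧
      (¬ (∀ e ∈ A, ∀ f ∈ A, e ≠ f → Disjoint e f) → pmContainProb n A = 0)) ∧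
    (∀ S : Finset (Finset (Fin n)), (∀ e ∈ S, e.card = 2) →
      pmContainProb n S ≤ 2 * (Real.exp 1 / n) ^ S.card) := by
  classical
  obtain ⟨m, hm⟩ : ∃ m, n = 2*m := by
    obtain ⟨r, hr⟩ := hne; exact ⟨r, by omega⟩
  have hm1 : 1 ≤ m := by omega
  have hhalf : n/2 = m := by omega
  have hcardU : (Finset.univ : Finset (Fin n)).card = n := by simp
  have hden := pmOn_card (n := n) m Finset.univ (by rw [hcardU, hm])
  have hbpos : 0 < (pmOn n (Finset.univ : Finset (Fin n))).card := by
    rcases Nat.eq_zero_or_pos (pmOn n (Finset.univ : Finset (Fin n))).card with h0 | h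
    · rw [h0, Nat.zero_mul] at hden
      exact absurd hden.symm (Nat.factorial_pos _).ne'
    · exact h
  have hbR : (0:ℝ) < ((pmOn n (Finset.univ : Finset (Fin n))).card : ℝ) := by
    exact_mod_cast hbpos
  -- the exact probability formula
  have part1 : ∀ (k : ℕ) (A : Finset (Finset (Fin n))), 1 ≤ k → k ≤ n / 2 → A.card = k →
      (∀ e ∈ A, e.card = 2) → (∀ e ∈ A, ∀ f ∈ A, e ≠ f → Disjoint e f) →
      pmContainProb n A =
        2 ^ k * ((n / 2).factorial : ℝ) / ((n / 2 - k).factorial : ℝ) *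
          (((n - 2 * k).factorial : ℝ) / (n.factorial : ℝ)) := by
    intro k A hk1 hkm hAk h2 hd
    have hkm' : k ≤ m := by omega
    obtain ⟨s, hks⟩ : ∃ s, m = k + s := ⟨m - k, by omega⟩
    have hsk : m - k = s := by omega
    have hnum := numer_card n A h2 hd
    have hUcard : ((Finset.univ : Finset (Fin n)) \ A.biUnion id).card = 2*s := by
      rw [Finset.card_sdiff_of_subset (Finset.subset_univ _), hcardU, cover_card n A h2 hd, hAk]; omega
    have ha := pmOn_card (n := n) s _ hUcard
    have hprob : pmContainProb n A =
        ((pmOn n ((Finset.univ : Finset (Fin n)) \ A.biUnion id)).card : ℝ) /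
        ((pmOn n (Finset.univ : Finset (Fin n))).card : ℝ) := by
      rw [pmContainProb_def, hnum, filter_pm_eq]
    rw [hprob, hhalf, hsk, show n - 2*k = 2*s from by omega,
      show n.factorial = (2*m).factorial from by rw [hm]]
    have haR : ((pmOn n ((Finset.univ : Finset (Fin n)) \ A.biUnion id)).card : ℝ) *
        (2^s * (s.factorial : ℝ)) = ((2*s).factorial : ℝ) := by
      exact_mod_cast ha
    have hbRid : ((pmOn n (Finset.univ : Finset (Fin n))).card : ℝ) *
        (2^m * (m.factorial : ℝ)) = ((2*m).factorial : ℝ) := by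
      exact_mod_cast hden
    have hf1 : (0:ℝ) < ((s).factorial : ℝ) := by exact_mod_cast Nat.factorial_pos _
    have hf2 : (0:ℝ) < ((2*m).factorial : ℝ) := by exact_mod_cast Nat.factorial_pos _
    rw [div_mul_div_comm, div_eq_div_iff hbR.ne' (by positivity)]
    rw [← haR, ← hbRid]
    rw [hks, pow_add]
    ring
  -- the probability bound
  have part1b : ∀ (k : ℕ) (A : Finset (Finset (Fin n))), 1 ≤ k → k ≤ n / 2 → A.card = k →
      (∀ e ∈ A, e.card = 2) → (∀ e ∈ A, ∀ f ∈ A, e ≠ f → Disjoint e f) →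
      pmContainProb n A ≤ (Real.exp 1 / n) ^ k := by
    intro k A hk1 hkm hAk h2 hd
    rw [part1 k A hk1 hkm hAk h2 hd]
    have hkm' : k ≤ m := by omega
    obtain ⟨s, hks⟩ : ∃ s, m = k + s := ⟨m - k, by omega⟩
    have hsk : m - k = s := by omega
    have hnn : (n:ℝ) = 2*((k:ℝ) + (s:ℝ)) := by
      rw [hm, hks]; push_cast; ring
    rw [hhalf, hsk, show n - 2*k = 2*s from by omega,
      show n.factorial = (2*(k + s)).factorial from by rw [← hks, ← hm],
      show m.factorial = (k + s).factorial from by rw [← hks], hnn]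
    exact PMaux.ratio_le k s hk1
  -- probability zero when not a matching
  have hzero : ∀ A : Finset (Finset (Fin n)),
      (¬ (∀ e ∈ A, ∀ f ∈ A, e ≠ f → Disjoint e f)) → pmContainProb n A = 0 := by
    intro A hnd
    have hempty : (Finset.univ.filter (fun M : Finset (Finset (Fin n)) =>
        IsPerfectMatching n M ∧ A ⊆ M)) = ∅ := by
      rw [Finset.filter_eq_empty_iff]
      rintro M - ⟨hPM, hAM⟩
      exact hnd (fun e he f hf hef => hPM.2.1 e (hAM he) f (hAM hf) hef)
    rw [pmContainProb_def, hempty]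
    simp
  refine ⟨fun k A hk1 hk2 hAk h2 =>
    ⟨fun hd => ⟨part1 k A hk1 hk2 hAk h2 hd, part1b k A hk1 hk2 hAk h2 hd⟩,
     fun hnd => hzero A hnd⟩, ?_⟩
  -- spreadness for an arbitrary set of edges
  intro S hS2
  have hexp : (0:ℝ) ≤ Real.exp 1 / n := by positivity
  by_cases hdS : ∀ e ∈ S, ∀ f ∈ S, e ≠ f → Disjoint e f
  · rcases Nat.eq_zero_or_pos S.card with h0 | hpos
    · have hSempty : S = ∅ := Finset.card_eq_zero.mp h0
      subst hSempty
      have hone : pmContainProb n (∅ : Finset (Finset (Fin n))) = 1 := by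
        rw [pmContainProb_def]
        have heq : (Finset.univ.filter (fun M : Finset (Finset (Fin n)) =>
            IsPerfectMatching n M ∧ (∅ : Finset (Finset (Fin n))) ⊆ M))
            = (Finset.univ.filter (fun M : Finset (Finset (Fin n)) => IsPerfectMatching n M)) := by
          apply Finset.filter_congr
          intro M _
          simp
        rw [heq, filter_pm_eq]
        exact div_self hbR.ne'
      rw [hone]
      simp
    · by_cases hk : S.card ≤ n/2
      · have := part1b S.card S hpos hk rfl hS2 hdS
        have hpow : (0:ℝ) ≤ (Real.exp 1 / n) ^ S.card := by positivity
        linarith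
      · have hempty : (Finset.univ.filter (fun M : Finset (Finset (Fin n)) =>
            IsPerfectMatching n M ∧ S ⊆ M)) = ∅ := by
          rw [Finset.filter_eq_empty_iff]
          rintro M - ⟨hPM, hSM⟩
          have hMO : matchOn n Finset.univ M :=
            ⟨hPM.1, hPM.2.1, fun e _ => Finset.subset_univ _, fun v _ => hPM.2.2 v⟩
          have hsz := pm_size hMO
          rw [hcardU] at hsz
          have hle := Finset.card_le_card hSM
          omega
        rw [pmContainProb_def, hempty]
        simp
        positivity
  · rw [hzero S hdS]
    positivity
end

section
/- Scaling window for isolated vertices: Fix c ∈ ℝ and let p = p(n) = (log n + c)/n. Then the probability that G(n,p) has no isolated vertex converges, as n → ∞, to exp(−e^{−c}). -/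
open Finset Filter

/-- The possible edges of a graph on `{1,…,n}`: the 2-element subsets. -/
abbrev GEdge (n : ℕ) := {s : Finset (Fin n) // s.card = 2}

open Classical in
/-- The probability that the Erdős–Rényi random graph `G(n,p)`, in which each of the
`binom(n,2)` possible edges is present independently with probability `p`, satisfies
the property `P` (a graph is identified with its set of edges). -/
noncomputable def gprob (n : ℕ) (p : ℝ) (P : Finset (GEdge n) → Prop) : ℝ :=
  ∑ S : Finset (GEdge n),
    if P S then p ^ S.card * (1 - p) ^ (Fintype.card (GEdge n) - S.card) else 0


lemma binom_powerset_sum {ι : Type*} [Fintype ι] [DecidableEq ι] (p : ℝ) (U : Finset ι) :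
    ∑ S ∈ U.powerset, p ^ S.card * (1 - p) ^ (Fintype.card ι - S.card)
      = (1 - p) ^ (Fintype.card ι - U.card) := by
  have key : ∑ S ∈ U.powerset, p ^ S.card * (1 - p) ^ (U.card - S.card) = 1 := by
    have := Finset.prod_add (fun _ : ι => p) (fun _ : ι => (1 - p)) U
    simp only [add_sub_cancel, prod_const, one_pow] at this
    refine (Finset.sum_congr rfl ?_).trans this.symm
    intro t ht
    rw [Finset.mem_powerset] at ht
    rw [Finset.card_sdiff_of_subset ht]
  calc ∑ S ∈ U.powerset, p ^ S.card * (1 - p) ^ (Fintype.card ι - S.card)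
      = ∑ S ∈ U.powerset, (1 - p) ^ (Fintype.card ι - U.card)
          * (p ^ S.card * (1 - p) ^ (U.card - S.card)) := by
        apply Finset.sum_congr rfl
        intro S hS
        rw [Finset.mem_powerset] at hS
        have h1 : S.card ≤ U.card := Finset.card_le_card hS
        have h2 : U.card ≤ Fintype.card ι := Finset.card_le_univ U
        have : Fintype.card ι - S.card = (Fintype.card ι - U.card) + (U.card - S.card) := by
          omega
        rw [this, pow_add]; ring
    _ = (1 - p) ^ (Fintype.card ι - U.card) := by
        rw [← Finset.mul_sum, key, mul_one]

open Classical in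
lemma touch_card (n : ℕ) (A : Finset (Fin n)) :
    (univ.filter (fun e : GEdge n => ∃ v ∈ A, v ∈ e.val)).card
      = n.choose 2 - (n - A.card).choose 2 := by
  have htot : Fintype.card (GEdge n) = n.choose 2 := by
    rw [Fintype.card_finset_len, Fintype.card_fin]
  have hcompl : (univ.filter (fun e : GEdge n => ¬ ∃ v ∈ A, v ∈ e.val)).card
      = (n - A.card).choose 2 := by
    have : (univ.filter (fun e : GEdge n => ¬ ∃ v ∈ A, v ∈ e.val)).card
        = ((univ \ A).powersetCard 2).card := by
      apply Finset.card_bij (fun e _ => e.val)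
      · intro e he
        rw [Finset.mem_filter] at he
        rw [Finset.mem_powersetCard]
        refine ⟨fun v hv => ?_, e.prop⟩
        rw [Finset.mem_sdiff]
        exact ⟨Finset.mem_univ v, fun hvA => he.2 ⟨v, hvA, hv⟩⟩
      · intro e₁ h₁ e₂ h₂ h
        exact Subtype.ext h
      · intro s hs
        rw [Finset.mem_powersetCard] at hs
        refine ⟨⟨s, hs.2⟩, ?_, rfl⟩
        rw [Finset.mem_filter]
        refine ⟨Finset.mem_univ _, fun ⟨v, hvA, hvs⟩ => ?_⟩
        have := hs.1 hvs
        rw [Finset.mem_sdiff] at this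
        exact this.2 hvA
    rw [this, Finset.card_powersetCard, Finset.card_sdiff_of_subset (Finset.subset_univ A),
      Finset.card_univ, Fintype.card_fin]
  have hsum := Finset.card_filter_add_card_filter_not
    (s := (univ : Finset (GEdge n))) (p := fun e : GEdge n => ∃ v ∈ A, v ∈ e.val)
  rw [Finset.card_univ, htot, hcompl] at hsum
  have hle : (n - A.card).choose 2 ≤ n.choose 2 :=
    Nat.choose_le_choose 2 (Nat.sub_le n A.card)
  omega

open Classical in
lemma sum_if_avoid (n : ℕ) (p : ℝ) (A : Finset (Fin n)) :
    (∑ S : Finset (GEdge n),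
      if ∀ v ∈ A, ¬ ∃ e ∈ S, v ∈ e.val then
        p ^ S.card * (1 - p) ^ (Fintype.card (GEdge n) - S.card) else 0)
      = (1 - p) ^ (n.choose 2 - (n - A.card).choose 2) := by
  classical
  set T := univ.filter (fun e : GEdge n => ∃ v ∈ A, v ∈ e.val) with hT
  rw [← Finset.sum_filter]
  have hset : (univ.filter (fun S : Finset (GEdge n) => ∀ v ∈ A, ¬ ∃ e ∈ S, v ∈ e.val))
      = (univ \ T).powerset := by
    ext S
    simp only [Finset.mem_filter, Finset.mem_univ, true_and, Finset.mem_powerset,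
      Finset.subset_iff, Finset.mem_sdiff, hT]
    constructor
    · intro h e heS
      exact fun ⟨v, hvA, hve⟩ => h v hvA ⟨e, heS, hve⟩
    · rintro h v hvA ⟨e, heS, hve⟩
      exact (h heS) ⟨v, hvA, hve⟩
  rw [hset, binom_powerset_sum]
  congr 1
  have h1 : (univ \ T).card = Fintype.card (GEdge n) - T.card := by
    rw [Finset.card_sdiff_of_subset (Finset.subset_univ T), Finset.card_univ]
  have h2 : T.card ≤ Fintype.card (GEdge n) := by
    rw [← Finset.card_univ]; exact Finset.card_le_univ T
  have h3 : T.card = n.choose 2 - (n - A.card).choose 2 := touch_card n A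
  omega

lemma alt_partial_sum (t m : ℕ) :
    ∑ k ∈ Finset.range (t + 1), (-1 : ℝ) ^ k * (m.choose k : ℝ)
      = if m = 0 then 1 else (-1 : ℝ) ^ t * ((m - 1).choose t : ℝ) := by
  induction t with
  | zero =>
    cases m with
    | zero => simp
    | succ m' => simp
  | succ t ih =>
    rw [Finset.sum_range_succ, ih]
    cases m with
    | zero => simp [Nat.choose_eq_zero_of_lt (Nat.succ_pos t)]
    | succ m' =>
      simp only [Nat.succ_ne_zero, if_false, Nat.succ_sub_one]
      rw [Nat.choose_succ_succ m' t]
      push_cast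
      ring

open Classical in
lemma term_eq (n : ℕ) (p : ℝ) (k : ℕ) :
    (n.choose k : ℝ) * (1 - p) ^ (n.choose 2 - (n - k).choose 2)
      = ∑ S : Finset (GEdge n),
          (p ^ S.card * (1 - p) ^ (Fintype.card (GEdge n) - S.card)) *
            (((univ.filter (fun v : Fin n => ¬ ∃ e ∈ S, v ∈ e.val)).card.choose k : ℝ)) := by
  calc (n.choose k : ℝ) * (1 - p) ^ (n.choose 2 - (n - k).choose 2)
      = ∑ _A ∈ Finset.powersetCard k (univ : Finset (Fin n)),
          (1 - p) ^ (n.choose 2 - (n - k).choose 2) := by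
        rw [Finset.sum_const, Finset.card_powersetCard, Finset.card_univ, Fintype.card_fin,
          nsmul_eq_mul]
    _ = ∑ A ∈ Finset.powersetCard k (univ : Finset (Fin n)),
          ∑ S : Finset (GEdge n),
            (if ∀ v ∈ A, ¬ ∃ e ∈ S, v ∈ e.val then
              p ^ S.card * (1 - p) ^ (Fintype.card (GEdge n) - S.card) else 0) := by
        apply Finset.sum_congr rfl
        intro A hA
        rw [sum_if_avoid n p A, (Finset.mem_powersetCard.1 hA).2]
    _ = ∑ S : Finset (GEdge n),
          ∑ A ∈ Finset.powersetCard k (univ : Finset (Fin n)),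
            (if ∀ v ∈ A, ¬ ∃ e ∈ S, v ∈ e.val then
              p ^ S.card * (1 - p) ^ (Fintype.card (GEdge n) - S.card) else 0) :=
        Finset.sum_comm
    _ = ∑ S : Finset (GEdge n),
          (p ^ S.card * (1 - p) ^ (Fintype.card (GEdge n) - S.card)) *
            (((univ.filter (fun v : Fin n => ¬ ∃ e ∈ S, v ∈ e.val)).card.choose k : ℝ)) := by
        apply Finset.sum_congr rfl
        intro S _
        rw [← Finset.sum_filter]
        have hfil : (Finset.powersetCard k (univ : Finset (Fin n))).filter
              (fun A => ∀ v ∈ A, ¬ ∃ e ∈ S, v ∈ e.val)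
            = Finset.powersetCard k (univ.filter (fun v : Fin n => ¬ ∃ e ∈ S, v ∈ e.val)) := by
          ext A
          simp only [Finset.mem_filter, Finset.mem_powersetCard, Finset.subset_iff,
            Finset.mem_univ, true_and]
          tauto
        rw [hfil, Finset.sum_const, Finset.card_powersetCard, nsmul_eq_mul, mul_comm]

open Classical in
lemma gprob_eq (n : ℕ) (p : ℝ) :
    gprob n p (fun S => ∀ v : Fin n, ∃ e ∈ S, v ∈ e.val)
      = ∑ S : Finset (GEdge n),
          (p ^ S.card * (1 - p) ^ (Fintype.card (GEdge n) - S.card)) *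
            (if (univ.filter (fun v : Fin n => ¬ ∃ e ∈ S, v ∈ e.val)).card = 0
              then (1 : ℝ) else 0) := by
  rw [gprob]
  apply Finset.sum_congr rfl
  intro S _
  have hiff : ((univ.filter (fun v : Fin n => ¬ ∃ e ∈ S, v ∈ e.val)).card = 0)
      ↔ (∀ v : Fin n, ∃ e ∈ S, v ∈ e.val) := by
    rw [Finset.card_eq_zero, Finset.filter_eq_empty_iff]
    constructor
    · intro h v
      by_contra hc
      exact h (Finset.mem_univ v) hc
    · intro h v _
      exact not_not_intro (h v)
  by_cases h : ∀ v : Fin n, ∃ e ∈ S, v ∈ e.val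
  · rw [if_pos h, if_pos (hiff.2 h), mul_one]
  · rw [if_neg h, if_neg (fun hc => h (hiff.1 hc)), mul_zero]

open Classical in
lemma Tsum_eq (n : ℕ) (p : ℝ) (t : ℕ) :
    ∑ k ∈ Finset.range (t + 1),
        (-1 : ℝ) ^ k * ((n.choose k : ℝ) * (1 - p) ^ (n.choose 2 - (n - k).choose 2))
      = ∑ S : Finset (GEdge n),
          (p ^ S.card * (1 - p) ^ (Fintype.card (GEdge n) - S.card)) *
            (∑ k ∈ Finset.range (t + 1),
              (-1 : ℝ) ^ k *
                (((univ.filter (fun v : Fin n => ¬ ∃ e ∈ S, v ∈ e.val)).card.choose k : ℝ))) := by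
  have h1 : ∀ k, (-1 : ℝ) ^ k * ((n.choose k : ℝ) * (1 - p) ^ (n.choose 2 - (n - k).choose 2))
      = ∑ S : Finset (GEdge n),
          (p ^ S.card * (1 - p) ^ (Fintype.card (GEdge n) - S.card)) *
            ((-1 : ℝ) ^ k *
              (((univ.filter (fun v : Fin n => ¬ ∃ e ∈ S, v ∈ e.val)).card.choose k : ℝ))) := by
    intro k
    rw [term_eq n p k, Finset.mul_sum]
    apply Finset.sum_congr rfl
    intro S _
    ring
  calc ∑ k ∈ Finset.range (t + 1),
        (-1 : ℝ) ^ k * ((n.choose k : ℝ) * (1 - p) ^ (n.choose 2 - (n - k).choose 2))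
      = ∑ k ∈ Finset.range (t + 1), ∑ S : Finset (GEdge n),
          (p ^ S.card * (1 - p) ^ (Fintype.card (GEdge n) - S.card)) *
            ((-1 : ℝ) ^ k *
              (((univ.filter (fun v : Fin n => ¬ ∃ e ∈ S, v ∈ e.val)).card.choose k : ℝ))) :=
        Finset.sum_congr rfl (fun k _ => h1 k)
    _ = _ := by
        rw [Finset.sum_comm]
        apply Finset.sum_congr rfl
        intro S _
        rw [Finset.mul_sum]

open Classical in
lemma gprob_le_Tsum (n : ℕ) (p : ℝ) (hp0 : 0 ≤ p) (hp1 : p ≤ 1) (t : ℕ) (ht : Even t) :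
    gprob n p (fun S => ∀ v : Fin n, ∃ e ∈ S, v ∈ e.val)
      ≤ ∑ k ∈ Finset.range (t + 1),
          (-1 : ℝ) ^ k * ((n.choose k : ℝ) * (1 - p) ^ (n.choose 2 - (n - k).choose 2)) := by
  rw [gprob_eq, Tsum_eq]
  apply Finset.sum_le_sum
  intro S _
  apply mul_le_mul_of_nonneg_left _
    (mul_nonneg (pow_nonneg hp0 _) (pow_nonneg (by linarith) _))
  rw [alt_partial_sum]
  by_cases hm : (univ.filter (fun v : Fin n => ¬ ∃ e ∈ S, v ∈ e.val)).card = 0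
  · rw [if_pos hm, if_pos hm]
  · rw [if_neg hm, if_neg hm, ht.neg_one_pow, one_mul]
    positivity

open Classical in
lemma Tsum_le_gprob (n : ℕ) (p : ℝ) (hp0 : 0 ≤ p) (hp1 : p ≤ 1) (t : ℕ) (ht : Odd t) :
    ∑ k ∈ Finset.range (t + 1),
        (-1 : ℝ) ^ k * ((n.choose k : ℝ) * (1 - p) ^ (n.choose 2 - (n - k).choose 2))
      ≤ gprob n p (fun S => ∀ v : Fin n, ∃ e ∈ S, v ∈ e.val) := by
  rw [gprob_eq, Tsum_eq]
  apply Finset.sum_le_sum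
  intro S _
  apply mul_le_mul_of_nonneg_left _
    (mul_nonneg (pow_nonneg hp0 _) (pow_nonneg (by linarith) _))
  rw [alt_partial_sum]
  by_cases hm : (univ.filter (fun v : Fin n => ¬ ∃ e ∈ S, v ∈ e.val)).card = 0
  · rw [if_pos hm, if_pos hm]
  · rw [if_neg hm, if_neg hm, ht.neg_one_pow]
    have : (0:ℝ) ≤ (((univ.filter (fun v : Fin n => ¬ ∃ e ∈ S, v ∈ e.val)).card - 1).choose t : ℝ) :=
      Nat.cast_nonneg _
    linarith

lemma choose_two_real (m : ℕ) : ((m.choose 2 : ℕ) : ℝ) = m * (m - 1) / 2 := by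
  cases m with
  | zero => simp
  | succ m' =>
    have h2 : 2 ∣ (m' + 1) * m' := (by rw [mul_comm]; exact (Nat.even_mul_succ_self m').two_dvd)
    have : (m' + 1).choose 2 = (m' + 1) * m' / 2 := by
      rw [Nat.choose_two_right, Nat.succ_sub_one]
    rw [this, Nat.cast_div h2 (by norm_num)]
    push_cast
    ring

lemma Mcast (n k : ℕ) (h : k ≤ n) :
    ((n.choose 2 - (n - k).choose 2 : ℕ) : ℝ) = k * n - k * (k + 1) / 2 := by
  have h2 : (n - k).choose 2 ≤ n.choose 2 := Nat.choose_le_choose 2 (Nat.sub_le n k)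
  rw [Nat.cast_sub h2, choose_two_real, choose_two_real, Nat.cast_sub h]
  ring

lemma log_one_sub_bounds {x : ℝ} (h0 : 0 ≤ x) (h1 : x ≤ 1/2) :
    -x - 2*x^2 ≤ Real.log (1 - x) ∧ Real.log (1 - x) ≤ -x := by
  have hpos : 0 < 1 - x := by linarith
  have upper := Real.log_le_sub_one_of_pos hpos
  have lower := Real.one_sub_inv_le_log_of_pos hpos
  constructor
  · have hinv : (1 - x)⁻¹ ≤ 1 + x + 2*x^2 := by
      rw [inv_le_iff_one_le_mul₀ hpos]
      nlinarith
    linarith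
  · linarith

lemma p_tendsto_zero (c : ℝ) :
    Tendsto (fun n : ℕ => (Real.log n + c) / n) atTop (nhds 0) := by
  have h : Tendsto (fun x : ℝ => (Real.log x + c) / x) atTop (nhds 0) := by
    have h1 : Tendsto (fun x : ℝ => Real.log x / x) atTop (nhds 0) := by
      simpa using Real.tendsto_pow_log_div_mul_add_atTop 1 0 1 one_ne_zero
    have h2 : Tendsto (fun x : ℝ => c / x) atTop (nhds 0) :=
      tendsto_const_nhds.div_atTop tendsto_id
    have := h1.add h2
    rw [add_zero] at this
    refine this.congr (fun x => ?_)
    ring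
  exact h.comp tendsto_natCast_atTop_atTop

lemma log_one_sub_p_tendsto (c : ℝ) :
    Tendsto (fun n : ℕ => Real.log (1 - (Real.log n + c) / n)) atTop (nhds 0) := by
  have h1 : Tendsto (fun n : ℕ => 1 - (Real.log n + c) / n) atTop (nhds 1) := by
    have := (tendsto_const_nhds (x := (1:ℝ))).sub (p_tendsto_zero c)
    rwa [sub_zero] at this
  have h2 : Tendsto Real.log (nhds 1) (nhds 0) := by
    have := (Real.continuousAt_log one_ne_zero).tendsto
    rwa [Real.log_one] at this
  exact h2.comp h1

lemma key_limit (c : ℝ) :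
    Tendsto (fun n : ℕ =>
        Real.log n + (n : ℝ) * Real.log (1 - (Real.log n + c) / n) + c)
      atTop (nhds 0) := by
  have hb : Tendsto (fun n : ℕ => -(2 * (Real.log n + c)^2 / n)) atTop (nhds 0) := by
    have h : Tendsto (fun x : ℝ => 2 * (Real.log x + c)^2 / x) atTop (nhds 0) := by
      have h1 : Tendsto (fun x : ℝ => Real.log x ^ 2 / x) atTop (nhds 0) := by
        simpa using Real.tendsto_pow_log_div_mul_add_atTop 1 0 2 one_ne_zero
      have h2 : Tendsto (fun x : ℝ => Real.log x / x) atTop (nhds 0) := by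
        simpa using Real.tendsto_pow_log_div_mul_add_atTop 1 0 1 one_ne_zero
      have h3 : Tendsto (fun x : ℝ => (2*c^2) / x) atTop (nhds 0) :=
        tendsto_const_nhds.div_atTop tendsto_id
      have := ((h1.const_mul 2).add (h2.const_mul (4*c))).add h3
      simp only [mul_zero, add_zero, zero_add] at this
      refine this.congr (fun x => ?_)
      ring
    have := (h.comp tendsto_natCast_atTop_atTop).neg
    simpa using this
  have hlog : Tendsto (fun n : ℕ => Real.log (n : ℝ)) atTop atTop :=
    Real.tendsto_log_atTop.comp tendsto_natCast_atTop_atTop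
  have hp0 : ∀ᶠ n : ℕ in atTop, 0 ≤ (Real.log n + c) / n := by
    filter_upwards [hlog.eventually_ge_atTop (-c), eventually_ge_atTop 1] with n h1 h2
    have : (0:ℝ) < n := by exact_mod_cast h2
    apply div_nonneg (by linarith) this.le
  have hp12 : ∀ᶠ n : ℕ in atTop, (Real.log n + c) / n ≤ 1/2 :=
    (p_tendsto_zero c).eventually_le_const (by norm_num)
  apply tendsto_of_tendsto_of_tendsto_of_le_of_le' hb tendsto_const_nhds
  · filter_upwards [hp0, hp12, eventually_ge_atTop 1] with n h0 h12 h1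
    have hn : (0:ℝ) < n := by exact_mod_cast h1
    set x := (Real.log n + c) / n with hx
    have hnx : (n:ℝ) * x = Real.log n + c := by
      rw [hx]; field_simp
    have hlb := (log_one_sub_bounds h0 h12).1
    have : Real.log n + (n:ℝ) * Real.log (1 - x) + c
        = (n:ℝ) * (x + Real.log (1 - x)) := by
      rw [mul_add, hnx]; ring
    rw [this]
    have h2 : -(2*x^2) ≤ x + Real.log (1 - x) := by linarith
    have h3 : (n:ℝ) * (-(2*x^2)) ≤ (n:ℝ) * (x + Real.log (1 - x)) :=
      mul_le_mul_of_nonneg_left h2 hn.le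
    refine le_trans (le_of_eq ?_) h3
    rw [hx]
    field_simp
  · filter_upwards [hp0, hp12, eventually_ge_atTop 1] with n h0 h12 h1
    have hn : (0:ℝ) < n := by exact_mod_cast h1
    set x := (Real.log n + c) / n with hx
    have hnx : (n:ℝ) * x = Real.log n + c := by
      rw [hx]; field_simp
    have hub := (log_one_sub_bounds h0 h12).2
    have heq : Real.log n + (n:ℝ) * Real.log (1 - x) + c
        = (n:ℝ) * (x + Real.log (1 - x)) := by
      rw [mul_add, hnx]; ring
    rw [heq]
    have h2 : x + Real.log (1 - x) ≤ 0 := by linarith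
    exact mul_nonpos_of_nonneg_of_nonpos hn.le h2

lemma term_tendsto (c : ℝ) (k : ℕ) :
    Tendsto (fun n : ℕ =>
        (n.choose k : ℝ) *
          (1 - (Real.log n + c) / n) ^ (n.choose 2 - (n - k).choose 2))
      atTop (nhds (Real.exp (-((k : ℝ) * c)) / (k.factorial : ℝ))) := by
  set p : ℕ → ℝ := fun n => (Real.log n + c) / n with hp
  -- the "nice" form
  set F : ℕ → ℝ := fun n =>
    (1 / (k.factorial : ℝ)) * (∏ i ∈ Finset.range k, (1 - (i : ℝ) / n)) *
      Real.exp ((k : ℝ) * Real.log n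
        + ((k : ℝ) * n - k * (k + 1) / 2) * Real.log (1 - p n)) with hF
  have hFlim : Tendsto F atTop
      (nhds ((1 / (k.factorial : ℝ)) * (1 * Real.exp (-((k : ℝ) * c))))) := by
    have hprod : Tendsto (fun n : ℕ => ∏ i ∈ Finset.range k, (1 - (i : ℝ) / n))
        atTop (nhds 1) := by
      have : Tendsto (fun n : ℕ => ∏ i ∈ Finset.range k, (1 - (i : ℝ) / n))
          atTop (nhds (∏ _i ∈ Finset.range k, (1:ℝ))) := by
        apply tendsto_finset_prod
        intro i _
        have : Tendsto (fun n : ℕ => (i : ℝ) / n) atTop (nhds 0) :=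
          tendsto_const_nhds.div_atTop tendsto_natCast_atTop_atTop
        have := (tendsto_const_nhds (x := (1:ℝ))).sub this
        simpa using this
      simpa using this
    have hexp : Tendsto (fun n : ℕ =>
        (k : ℝ) * Real.log n
          + ((k : ℝ) * n - k * (k + 1) / 2) * Real.log (1 - p n))
        atTop (nhds (-((k : ℝ) * c))) := by
      have h1 := (key_limit c).const_mul (k : ℝ)
      have h2 := (log_one_sub_p_tendsto c).const_mul ((k : ℝ) * (k + 1) / 2)
      have h3 := h1.sub h2
      simp only [mul_zero, sub_zero] at h3
      have h4 := h3.sub_const ((k : ℝ) * c)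
      rw [zero_sub] at h4
      refine h4.congr (fun n => ?_)
      simp only [hp]
      ring
    have := (hprod.mul (hexp.rexp)).const_mul (1 / (k.factorial : ℝ))
    refine this.congr (fun n => ?_)
    simp only [hF]; ring
  rw [show Real.exp (-((k : ℝ) * c)) / (k.factorial : ℝ)
      = (1 / (k.factorial : ℝ)) * (1 * Real.exp (-((k : ℝ) * c))) by ring]
  apply hFlim.congr'
  have hq : ∀ᶠ n : ℕ in atTop, p n < 1 := (p_tendsto_zero c).eventually_lt_const (by norm_num)
  filter_upwards [hq, eventually_ge_atTop (k + 1)] with n hqn hkn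
  have hkle : k ≤ n := le_trans (Nat.le_succ k) hkn
  have hn1 : 1 ≤ n := le_trans (Nat.le_add_left 1 k) hkn
  have hnpos : (0:ℝ) < n := by exact_mod_cast hn1
  have hqpos : (0:ℝ) < 1 - p n := by linarith
  -- rewrite the power as an exponential
  have hpow : (1 - p n) ^ (n.choose 2 - (n - k).choose 2)
      = Real.exp (((n.choose 2 - (n - k).choose 2 : ℕ) : ℝ) * Real.log (1 - p n)) := by
    rw [Real.exp_nat_mul, Real.exp_log hqpos]
  -- choose as descFactorial
  have hdesc : (n.choose k : ℝ) = (∏ i ∈ Finset.range k, ((n : ℝ) - i)) / (k.factorial : ℝ) := by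
    have h1 : (n.descFactorial k : ℝ) = (k.factorial : ℝ) * (n.choose k : ℝ) := by
      exact_mod_cast congrArg (Nat.cast (R := ℝ)) (Nat.descFactorial_eq_factorial_mul_choose n k)
    have h2 : (n.descFactorial k : ℝ) = ∏ i ∈ Finset.range k, ((n : ℝ) - i) := by
      rw [Nat.descFactorial_eq_prod_range, Nat.cast_prod]
      apply Finset.prod_congr rfl
      intro i hi
      rw [Finset.mem_range] at hi
      rw [Nat.cast_sub (le_trans hi.le hkle)]
    have hfac : (0:ℝ) < (k.factorial : ℝ) := by exact_mod_cast k.factorial_pos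
    field_simp at h1 ⊢
    linarith [h1, h2]
  have hsplit : ∏ i ∈ Finset.range k, ((n : ℝ) - i)
      = (n : ℝ) ^ k * ∏ i ∈ Finset.range k, (1 - (i : ℝ) / n) := by
    calc ∏ i ∈ Finset.range k, ((n : ℝ) - i)
        = ∏ i ∈ Finset.range k, ((n : ℝ) * (1 - (i : ℝ) / n)) := by
          apply Finset.prod_congr rfl
          intro i _
          field_simp
      _ = (n : ℝ) ^ k * ∏ i ∈ Finset.range k, (1 - (i : ℝ) / n) := by
          rw [Finset.prod_mul_distrib, Finset.prod_const, Finset.card_range]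
  have hnk : (n : ℝ) ^ k = Real.exp ((k : ℝ) * Real.log n) := by
    rw [Real.exp_nat_mul, Real.exp_log hnpos]
  simp only [hF]
  rw [hpow, hdesc, hsplit, hnk, Mcast n k hkle, Real.exp_add]
  ring

lemma Tsum_tendsto (c : ℝ) (t : ℕ) :
    Tendsto (fun n : ℕ => ∑ k ∈ Finset.range (t + 1),
        (-1 : ℝ) ^ k * ((n.choose k : ℝ) *
          (1 - (Real.log n + c) / n) ^ (n.choose 2 - (n - k).choose 2)))
      atTop
      (nhds (∑ k ∈ Finset.range (t + 1), (-Real.exp (-c)) ^ k / (k.factorial : ℝ))) := by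
  apply tendsto_finset_sum
  intro k _
  have heq : (-Real.exp (-c)) ^ k / (k.factorial : ℝ)
      = (-1 : ℝ) ^ k * (Real.exp (-((k : ℝ) * c)) / (k.factorial : ℝ)) := by
    rw [neg_pow, ← Real.exp_nat_mul]
    ring_nf
  rw [heq]
  exact (term_tendsto c k).const_mul ((-1 : ℝ) ^ k)

lemma partial_sums_tendsto (c : ℝ) :
    Tendsto (fun t : ℕ => ∑ k ∈ Finset.range (t + 1),
        (-Real.exp (-c)) ^ k / (k.factorial : ℝ))
      atTop (nhds (Real.exp (-Real.exp (-c)))) := by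
  have hs := NormedSpace.exp_series_hasSum_exp' (𝕂 := ℝ) (-Real.exp (-c))
  have h1 : Tendsto (fun t : ℕ => ∑ k ∈ Finset.range t,
      ((k.factorial : ℝ)⁻¹ : ℝ) • (-Real.exp (-c)) ^ k)
      atTop (nhds (NormedSpace.exp (-Real.exp (-c)))) := hs.tendsto_sum_nat
  have h2 := h1.comp (tendsto_add_atTop_nat 1)
  rw [show Real.exp (-Real.exp (-c)) = NormedSpace.exp (-Real.exp (-c)) from
    congrFun Real.exp_eq_exp_ℝ _]
  refine h2.congr (fun t => ?_)
  apply Finset.sum_congr rfl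
  intro k _
  rw [smul_eq_mul]
  ring

lemma p_eventually_bounds (c : ℝ) :
    ∀ᶠ n : ℕ in atTop, 0 ≤ (Real.log n + c) / n ∧ (Real.log n + c) / n ≤ 1 := by
  have hlog : Tendsto (fun n : ℕ => Real.log (n : ℝ)) atTop atTop :=
    Real.tendsto_log_atTop.comp tendsto_natCast_atTop_atTop
  filter_upwards [hlog.eventually_ge_atTop (-c), eventually_ge_atTop 1,
    (p_tendsto_zero c).eventually_le_const (by norm_num : (0:ℝ) < 1)] with n h1 h2 h3
  have : (0:ℝ) < n := by exact_mod_cast h2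
  exact ⟨div_nonneg (by linarith) this.le, h3⟩

/-- Scaling window for isolated vertices: for fixed `c ∈ ℝ` and `p = (log n + c)/n`,
the probability that `G(n,p)` has no isolated vertex converges to `exp(−e^{−c})`. -/
theorem isolated_vertices_scaling_window (c : ℝ) :
    Tendsto (fun n : ℕ =>
        gprob n ((Real.log n + c) / n)
          (fun S => ∀ v : Fin n, ∃ e ∈ S, v ∈ e.val))
      atTop (nhds (Real.exp (-Real.exp (-c)))) := by
  set L := Real.exp (-Real.exp (-c)) with hL
  set Lt : ℕ → ℝ := fun t => ∑ k ∈ Finset.range (t + 1),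
    (-Real.exp (-c)) ^ k / (k.factorial : ℝ) with hLt
  rw [Metric.tendsto_nhds]
  intro ε hε
  obtain ⟨t₀, ht₀⟩ := Metric.tendsto_atTop.1 (partial_sums_tendsto c) (ε / 2) (half_pos hε)
  have hdist_e : dist (Lt (2 * t₀)) L < ε / 2 := ht₀ (2 * t₀) (by omega)
  have hdist_o : dist (Lt (2 * t₀ + 1)) L < ε / 2 := ht₀ (2 * t₀ + 1) (by omega)
  rw [Real.dist_eq, abs_lt] at hdist_e hdist_o
  filter_upwards [p_eventually_bounds c,
    (Tsum_tendsto c (2 * t₀)).eventually (Metric.ball_mem_nhds _ (half_pos hε)),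
    (Tsum_tendsto c (2 * t₀ + 1)).eventually (Metric.ball_mem_nhds _ (half_pos hε))]
    with n hp hAe hAo
  simp only [Metric.mem_ball, Real.dist_eq, abs_lt] at hAe hAo
  have hupper := gprob_le_Tsum n _ hp.1 hp.2 (2 * t₀) (even_two_mul t₀)
  have hlower := Tsum_le_gprob n _ hp.1 hp.2 (2 * t₀ + 1) (odd_two_mul_add_one t₀)
  rw [Real.dist_eq, abs_lt]
  constructor
  · linarith [hAo.1, hdist_o.1, hlower]
  · linarith [hAe.2, hdist_e.2, hupper]
end
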